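/- arXiv:2307.06759 — 8 statements merged into one kernel-verified Lean document; each statement's English description precedes it below -/
import Mathlib

section
/- Let ω be a control on the discrete simplex of the uniform partition of [0,T], let (ℬ, |·|) be a Banach space, let μ > 1, and let R : 𝒮₂(⟦0,T⟧) → ℬ satisfy |R_{t_k t_{k+1}}| ≤ ω(t_k, t_{k+1})^μ for every k = 0,…,n−1 and |δR_{sut}| = |R_{st} − R_{su} − R_{ut}| ≤ ω(s,t)^μ for all grid points s ≤ u ≤ t. Then |R_{st}| ≤ K_μ · ω(s,t)^μ for all grid points s ≤ t, where K_μ = 2^μ ∑_{l=1}^∞ l^{−μ}. -/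
open Finset

private lemma my_add_rpow {x y p : ℝ} (hx : 0 ≤ x) (hy : 0 ≤ y) (hp : 1 ≤ p) :
    x ^ p + y ^ p ≤ (x + y) ^ p := by
  have hxy : 0 ≤ x + y := by linarith
  have key : ∀ a : ℝ, 0 ≤ a → a ≤ x + y → a ^ p ≤ a * (x + y) ^ (p - 1) := by
    intro a ha hale
    rcases eq_or_lt_of_le ha with h0 | h0
    · rw [← h0, Real.zero_rpow (by linarith), zero_mul]
    · have hap : a ^ p = a * a ^ (p - 1) := by
        nth_rewrite 2 [← Real.rpow_one a]
        rw [← Real.rpow_add h0]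
        ring_nf
      rw [hap]
      have h2 := Real.rpow_le_rpow ha hale (by linarith : (0:ℝ) ≤ p - 1)
      nlinarith [Real.rpow_nonneg ha (p-1)]
  have h1 := key x hx (by linarith)
  have h2 := key y hy (by linarith)
  have h3 : x * (x + y) ^ (p - 1) + y * (x + y) ^ (p - 1) = (x + y) ^ p := by
    rcases eq_or_lt_of_le hxy with h0 | h0
    · have hx0 : x = 0 := by linarith
      have hy0 : y = 0 := by linarith
      rw [hx0, hy0]
      simp [Real.zero_rpow (by linarith : p ≠ 0)]
    · rw [← add_mul]
      nth_rewrite 1 [← Real.rpow_one (x + y)]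
      rw [← Real.rpow_add h0]
      ring_nf
  linarith

private lemma my_sum_rpow {p : ℝ} (hp : 1 ≤ p) (r : ℕ) (f : ℕ → ℝ) (hf : ∀ i, 0 ≤ f i) :
    ∑ i ∈ range r, (f i) ^ p ≤ (∑ i ∈ range r, f i) ^ p := by
  induction r with
  | zero => simp [Real.zero_rpow (by linarith : p ≠ 0)]
  | succ r ih =>
    rw [Finset.sum_range_succ, Finset.sum_range_succ]
    calc ∑ i ∈ range r, f i ^ p + f r ^ p
        ≤ (∑ i ∈ range r, f i) ^ p + f r ^ p := by linarith
      _ ≤ (∑ i ∈ range r, f i + f r) ^ p :=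
          my_add_rpow (Finset.sum_nonneg fun i _ => hf i) (hf r) hp

/-- removing one interior point from a sum over consecutive pairs -/
private lemma sum_skip {M : Type*} [AddCommGroup M] (h h' : ℕ → M) (r a' : ℕ)
    (har : a' + 1 ≤ r)
    (e1 : ∀ b, b < a' → h' b = h b)
    (e2 : ∀ b, a' + 1 ≤ b → h' b = h (b + 1)) :
    ∑ b ∈ range r, h' b = (∑ b ∈ range (r + 1), h b) - h a' - h (a' + 1) + h' a' := by
  have hL : ∑ b ∈ range r, h' b
      = (∑ b ∈ Ico 0 a', h' b) + h' a' + ∑ b ∈ Ico (a' + 1) r, h' b := by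
    rw [range_eq_Ico, ← Finset.sum_Ico_consecutive h' (Nat.zero_le (a' + 1)) har,
      ← Finset.sum_Ico_consecutive h' (Nat.zero_le a') (Nat.le_succ a')]
    have : Ico a' (a' + 1) = {a'} := by
      ext x; simp only [Finset.mem_Ico, Finset.mem_singleton]; omega
    rw [this, Finset.sum_singleton]
  have hR : ∑ b ∈ range (r + 1), h b
      = (∑ b ∈ Ico 0 a', h b) + h a' + h (a' + 1) + ∑ b ∈ Ico (a' + 2) (r + 1), h b := by
    rw [range_eq_Ico, ← Finset.sum_Ico_consecutive h (Nat.zero_le (a' + 2)) (by omega),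
      ← Finset.sum_Ico_consecutive h (Nat.zero_le (a' + 1)) (by omega),
      ← Finset.sum_Ico_consecutive h (Nat.zero_le a') (Nat.le_succ a')]
    have h1 : Ico a' (a' + 1) = {a'} := by
      ext x; simp only [Finset.mem_Ico, Finset.mem_singleton]; omega
    have h2 : Ico (a' + 1) (a' + 2) = {a' + 1} := by
      ext x; simp only [Finset.mem_Ico, Finset.mem_singleton]; omega
    rw [h1, h2, Finset.sum_singleton, Finset.sum_singleton]
  have hmid : ∑ b ∈ Ico 0 a', h' b = ∑ b ∈ Ico 0 a', h b :=
    Finset.sum_congr rfl fun b hb => e1 b (by simpa [Finset.mem_Ico] using hb)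
  have htail : ∑ b ∈ Ico (a' + 1) r, h' b = ∑ b ∈ Ico (a' + 2) (r + 1), h b := by
    rw [Finset.sum_Ico_eq_sum_range, Finset.sum_Ico_eq_sum_range]
    have hc : r - (a' + 1) = r + 1 - (a' + 2) := by omega
    rw [← hc]
    refine Finset.sum_congr rfl fun i _ => ?_
    rw [e2 _ (by omega)]
    congr 1
    omega
  rw [hL, hmid, htail, hR]
  abel

section core

variable {E : Type*} [NormedAddCommGroup E]
variable (n : ℕ) (μ : ℝ) (ω : ℕ → ℕ → ℝ)

/-- the per-removal cost -/
noncomputable def sewG (μ : ℝ) (l : ℕ) : ℝ :=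
  if l ≤ 1 then 1 else 2 ^ μ * (l : ℝ) ^ (-μ)

variable (hnn : ∀ i j : ℕ, i ≤ j → j ≤ n → 0 ≤ ω i j)
variable (hsup : ∀ i j k : ℕ, i ≤ j → j ≤ k → k ≤ n → ω i j + ω j k ≤ ω i k)

include hnn hsup in
private lemma omega_mono_right {i j k : ℕ} (hij : i ≤ j) (hjk : j ≤ k) (hk : k ≤ n) :
    ω i j ≤ ω i k := by
  have := hsup i j k hij hjk hk
  have := hnn j k hjk hk
  linarith

include hnn hsup in
private lemma chain_omega (c : ℕ → ℕ) (hc : Monotone c) :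
    ∀ r : ℕ, c r ≤ n → ∑ a ∈ range r, ω (c a) (c (a + 1)) ≤ ω (c 0) (c r) := by
  intro r
  induction r with
  | zero => intro h; simpa using hnn (c 0) (c 0) le_rfl h
  | succ r ih =>
    intro h
    have hr : c r ≤ n := le_trans (hc (Nat.le_succ r)) h
    rw [Finset.sum_range_succ]
    have h1 := ih hr
    have h2 := hsup (c 0) (c r) (c (r + 1)) (hc (Nat.zero_le r)) (hc (Nat.le_succ r)) h
    linarith

include hnn hsup in
private lemma sum_v_le (c : ℕ → ℕ) (hc : Monotone c) :
    ∀ r : ℕ, c r ≤ n →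
      ∑ a ∈ Icc 1 (r - 1), ω (c (a - 1)) (c (a + 1)) ≤ ω (c 0) (c r) + ω (c 0) (c (r - 1)) := by
  intro r
  induction r with
  | zero =>
    intro h
    have h1 := hnn (c 0) (c 0) le_rfl h
    simp only [Nat.zero_sub]
    have : Icc 1 0 = (∅ : Finset ℕ) := Finset.Icc_eq_empty (by omega)
    rw [this, Finset.sum_empty]
    linarith
  | succ r ih =>
    intro h
    have hr : c r ≤ n := le_trans (hc (Nat.le_succ r)) h
    rcases Nat.eq_zero_or_pos r with h0 | hpos
    · subst h0
      simp only [Nat.add_sub_cancel]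
      have : Icc 1 0 = (∅ : Finset ℕ) := Finset.Icc_eq_empty (by omega)
      rw [this, Finset.sum_empty]
      have h1 := hnn (c 0) (c 1) (hc (Nat.zero_le 1)) h
      have h2 := hnn (c 0) (c 0) le_rfl hr
      linarith
    · obtain ⟨s, rfl⟩ : ∃ s, r = s + 1 := ⟨r - 1, by omega⟩
      have ih' := ih hr
      simp only [Nat.add_sub_cancel] at ih' ⊢
      rw [Finset.sum_Icc_succ_top (by omega)]
      simp only [Nat.add_sub_cancel]
      have hsup' := hsup (c 0) (c s) (c (s + 1 + 1)) (hc (Nat.zero_le _))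
        (hc (by omega)) h
      linarith

variable (R : ℕ → ℕ → E)
variable (hμ : 1 < μ)
variable (hdelta : ∀ i j k : ℕ, i ≤ j → j ≤ k → k ≤ n →
    ‖R i k - R i j - R j k‖ ≤ ω i k ^ μ)

include hnn hsup hμ hdelta in
private lemma sewing_partition :
    ∀ r : ℕ, 1 ≤ r → ∀ c : ℕ → ℕ, Monotone c → c r ≤ n →
      ‖R (c 0) (c r) - ∑ a ∈ range r, R (c a) (c (a + 1))‖ ≤
        (∑ l ∈ Icc 1 (r - 1), sewG μ l) * ω (c 0) (c r) ^ μ := by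
  intro r
  induction r with
  | zero => omega
  | succ r ih =>
    intro _ c hc hcn
    rcases Nat.eq_zero_or_pos r with h0 | hr1
    · subst h0
      have : Icc 1 0 = (∅ : Finset ℕ) := Finset.Icc_eq_empty (by omega)
      rw [this, Finset.sum_empty, Finset.sum_range_one, zero_mul, sub_self, norm_zero]
    -- r ≥ 1 : the partition has r + 1 ≥ 2 intervals and r interior points 1,…,r
    have hω0 : 0 ≤ ω (c 0) (c (r + 1)) := hnn _ _ (hc (Nat.zero_le _)) hcn
    have hμ0 : (0:ℝ) ≤ μ := by linarith
    have hpigeon : ∃ a, 1 ≤ a ∧ a ≤ r ∧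
        ω (c (a - 1)) (c (a + 1)) ^ μ ≤ sewG μ r * ω (c 0) (c (r + 1)) ^ μ := by
      rcases Nat.eq_or_lt_of_le hr1 with h1 | hr2
      · -- r = 1 : take a = 1, with cost sewG μ 1 = 1
        refine ⟨1, le_rfl, by omega, ?_⟩
        rw [← h1]
        simp [sewG]
      · -- r ≥ 2 : pigeonhole
        have hsumv : ∑ a ∈ Icc 1 r, ω (c (a - 1)) (c (a + 1)) ≤
            2 * ω (c 0) (c (r + 1)) := by
          have h1 := sum_v_le n ω hnn hsup c hc (r + 1) hcn
          simp only [Nat.add_sub_cancel] at h1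
          have hm : ω (c 0) (c r) ≤ ω (c 0) (c (r + 1)) :=
            omega_mono_right n ω hnn hsup (hc (Nat.zero_le _)) (hc (Nat.le_succ _)) hcn
          linarith
        have hrpos : (0:ℝ) < r := by exact_mod_cast hr1
        have hex : ∃ a ∈ Icc 1 r,
            (r : ℝ) * ω (c (a - 1)) (c (a + 1)) ≤ 2 * ω (c 0) (c (r + 1)) := by
          by_contra hcon
          push_neg at hcon
          have hlt : ∑ _a ∈ Icc 1 r, (2 * ω (c 0) (c (r + 1)) / r) <
              ∑ a ∈ Icc 1 r, ω (c (a - 1)) (c (a + 1)) := by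
            apply Finset.sum_lt_sum_of_nonempty
            · exact ⟨1, Finset.mem_Icc.mpr ⟨le_rfl, hr1⟩⟩
            · intro a ha
              have h2 := hcon a ha
              rw [div_lt_iff₀ hrpos]
              linarith
          rw [Finset.sum_const, Nat.card_Icc] at hlt
          simp only [Nat.add_sub_cancel, nsmul_eq_mul] at hlt
          rw [mul_div_assoc', mul_comm (r:ℝ), mul_div_assoc,
            div_self (ne_of_gt hrpos), mul_one] at hlt
          linarith
        obtain ⟨a, ha, hva⟩ := hex
        simp only [Finset.mem_Icc] at ha
        refine ⟨a, ha.1, ha.2, ?_⟩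
        have hvnn : 0 ≤ ω (c (a - 1)) (c (a + 1)) :=
          hnn _ _ (hc (by omega)) (le_trans (hc (by omega)) hcn)
        have hv2 : ω (c (a - 1)) (c (a + 1)) ≤ 2 * ω (c 0) (c (r + 1)) / r := by
          rw [le_div_iff₀ hrpos]
          linarith
        have h3 := Real.rpow_le_rpow hvnn hv2 hμ0
        refine le_trans h3 ?_
        have hG : sewG μ r = 2 ^ μ * (r : ℝ) ^ (-μ) := by
          simp only [sewG, if_neg (by omega : ¬ r ≤ 1)]
        rw [hG]
        refine le_of_eq ?_
        rw [Real.div_rpow (by positivity) (le_of_lt hrpos),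
          Real.mul_rpow (by norm_num) hω0, Real.rpow_neg (le_of_lt hrpos)]
        ring
    obtain ⟨a, ha1, ha2, hva⟩ := hpigeon
    obtain ⟨a', rfl⟩ : ∃ a', a = a' + 1 := ⟨a - 1, by omega⟩
    simp only [Nat.add_sub_cancel, show a' + 1 + 1 = a' + 2 from rfl] at hva
    -- the partition with the point a' + 1 removed
    set c' : ℕ → ℕ := fun b => if b < a' + 1 then c b else c (b + 1) with hc'def
    have hc' : Monotone c' := by
      apply monotone_nat_of_le_succ
      intro b
      simp only [hc'def]
      by_cases hb1 : b + 1 < a' + 1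
      · rw [if_pos (by omega), if_pos hb1]; exact hc (Nat.le_succ b)
      · by_cases hb2 : b < a' + 1
        · rw [if_pos hb2, if_neg hb1]; exact hc (by omega)
        · rw [if_neg hb2, if_neg hb1]; exact hc (by omega)
    have hc'0 : c' 0 = c 0 := by simp [hc'def]
    have hc'r : c' r = c (r + 1) := by simp only [hc'def, if_neg (by omega : ¬ r < a' + 1)]
    have hskip := sum_skip (fun b => R (c b) (c (b + 1))) (fun b => R (c' b) (c' (b + 1)))
      r a' (by omega)
      (fun b hb => by
        simp only [hc'def, if_pos (by omega : b < a' + 1), if_pos (by omega : b + 1 < a' + 1)])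
      (fun b hb => by
        simp only [hc'def, if_neg (by omega : ¬ b < a' + 1), if_neg (by omega : ¬ b + 1 < a' + 1)])
    beta_reduce at hskip
    simp only [show a' + 1 + 1 = a' + 2 from rfl] at hskip
    have hc'a : R (c' a') (c' (a' + 1)) = R (c a') (c (a' + 2)) := by
      simp only [hc'def, if_pos (by omega : a' < a' + 1), if_neg (lt_irrefl (a' + 1))]
    have hIH := ih hr1 c' hc' (by rw [hc'r]; exact hcn)
    rw [hc'0, hc'r] at hIH
    -- the key estimate
    have hdel : ‖(∑ b ∈ range r, R (c' b) (c' (b + 1))) -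
        (∑ b ∈ range (r + 1), R (c b) (c (b + 1)))‖ ≤
        sewG μ r * ω (c 0) (c (r + 1)) ^ μ := by
      rw [hskip, hc'a]
      have hd := hdelta (c a') (c (a' + 1)) (c (a' + 2)) (hc (Nat.le_succ a'))
        (hc (by omega)) (le_trans (hc (by omega : a' + 2 ≤ r + 1)) hcn)
      refine le_trans ?_ hva
      refine le_trans (le_of_eq ?_) hd
      congr 1
      abel
    have hfinal : ‖R (c 0) (c (r + 1)) - ∑ b ∈ range (r + 1), R (c b) (c (b + 1))‖ ≤
        (∑ l ∈ Icc 1 (r - 1), sewG μ l) * ω (c 0) (c (r + 1)) ^ μ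
          + sewG μ r * ω (c 0) (c (r + 1)) ^ μ := by
      calc ‖R (c 0) (c (r + 1)) - ∑ b ∈ range (r + 1), R (c b) (c (b + 1))‖
          = ‖(R (c 0) (c (r + 1)) - ∑ b ∈ range r, R (c' b) (c' (b + 1)))
              + ((∑ b ∈ range r, R (c' b) (c' (b + 1)))
                - ∑ b ∈ range (r + 1), R (c b) (c (b + 1)))‖ := by
            congr 1; abel
        _ ≤ ‖R (c 0) (c (r + 1)) - ∑ b ∈ range r, R (c' b) (c' (b + 1))‖
              + ‖(∑ b ∈ range r, R (c' b) (c' (b + 1)))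
                - ∑ b ∈ range (r + 1), R (c b) (c (b + 1))‖ := norm_add_le _ _
        _ ≤ _ := add_le_add hIH hdel
    refine le_trans hfinal ?_
    rw [← add_mul]
    apply mul_le_mul_of_nonneg_right _ (Real.rpow_nonneg hω0 μ)
    obtain ⟨s, rfl⟩ : ∃ s, r = s + 1 := ⟨r - 1, by omega⟩
    simp only [Nat.add_sub_cancel]
    rw [Finset.sum_Icc_succ_top (by omega)]

end core

private lemma sewing_summable {μ : ℝ} (hμ : 1 < μ) :
    Summable (fun l : ℕ => ((l : ℝ) + 1) ^ (-μ)) := by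
  have h1 : Summable (fun l : ℕ => ((l : ℝ)) ^ (-μ)) :=
    Real.summable_nat_rpow.mpr (by linarith)
  have h2 := (summable_nat_add_iff 1).mpr h1
  refine h2.congr fun l => ?_
  push_cast
  ring_nf

private lemma sewing_summable2 {μ : ℝ} (hμ : 1 < μ) :
    Summable (fun l : ℕ => ((l : ℝ) + 2) ^ (-μ)) := by
  have h1 : Summable (fun l : ℕ => ((l : ℝ)) ^ (-μ)) :=
    Real.summable_nat_rpow.mpr (by linarith)
  have h2 := (summable_nat_add_iff 2).mpr h1
  refine h2.congr fun l => ?_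
  push_cast
  ring_nf

private lemma sewK_bound {μ : ℝ} (hμ : 1 < μ) (q : ℕ) :
    1 + ∑ l ∈ Icc 1 q, sewG μ l ≤ 2 ^ μ * ∑' l : ℕ, ((l : ℝ) + 1) ^ (-μ) := by
  have hμ0 : (0:ℝ) ≤ μ := by linarith
  have hsum := sewing_summable hμ
  have hsum2 := sewing_summable2 hμ
  have h2μ : (2:ℝ) ≤ 2 ^ μ := by
    nth_rewrite 1 [show (2:ℝ) = 2 ^ (1:ℝ) by rw [Real.rpow_one]]
    exact Real.rpow_le_rpow_of_exponent_le (by norm_num) (le_of_lt hμ)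
  have htail : ∑' l : ℕ, ((l : ℝ) + 1) ^ (-μ) = 1 + ∑' l : ℕ, ((l : ℝ) + 2) ^ (-μ) := by
    rw [Summable.tsum_eq_zero_add hsum]
    congr 1
    · norm_num
    · exact tsum_congr fun l => by push_cast; ring_nf
  have htnn : 0 ≤ ∑' l : ℕ, ((l : ℝ) + 2) ^ (-μ) :=
    tsum_nonneg fun l => Real.rpow_nonneg (by positivity) _
  rcases Nat.eq_zero_or_pos q with h0 | hq
  · subst h0
    have : Icc 1 0 = (∅ : Finset ℕ) := Finset.Icc_eq_empty (by omega)
    rw [this, Finset.sum_empty, htail]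
    nlinarith
  · have hins : Icc 1 q = insert 1 (Icc 2 q) := by
      ext x; simp only [Finset.mem_Icc, Finset.mem_insert]; omega
    have hnotin : (1:ℕ) ∉ Icc 2 q := by simp
    rw [hins, Finset.sum_insert hnotin]
    have hG1 : sewG μ 1 = 1 := by simp [sewG]
    rw [hG1]
    have hGrest : ∑ l ∈ Icc 2 q, sewG μ l = 2 ^ μ * ∑ l ∈ Icc 2 q, ((l:ℝ)) ^ (-μ) := by
      rw [Finset.mul_sum]
      refine Finset.sum_congr rfl fun l hl => ?_
      simp only [Finset.mem_Icc] at hl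
      simp only [sewG, if_neg (by omega : ¬ l ≤ 1)]
    have hle : ∑ l ∈ Icc 2 q, ((l:ℝ)) ^ (-μ) ≤ ∑' l : ℕ, ((l : ℝ) + 2) ^ (-μ) := by
      have hIco : Icc 2 q = Ico 2 (q + 1) := by
        ext x; simp only [Finset.mem_Icc, Finset.mem_Ico]; omega
      rw [hIco, Finset.sum_Ico_eq_sum_range]
      have : ∀ i, ((2 + i : ℕ) : ℝ) ^ (-μ) = ((i : ℝ) + 2) ^ (-μ) := by
        intro i; congr 1; push_cast; ring
      rw [Finset.sum_congr rfl fun i _ => this i]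
      exact Summable.sum_le_tsum (range (q + 1 - 2))
        (fun l _ => Real.rpow_nonneg (by positivity) _) hsum2
    rw [hGrest, htail]
    have h4 : 2 ^ μ * ∑ l ∈ Icc 2 q, ((l:ℝ)) ^ (-μ) ≤
        2 ^ μ * ∑' l : ℕ, ((l : ℝ) + 2) ^ (-μ) :=
      mul_le_mul_of_nonneg_left hle (by positivity)
    nlinarith

/-- **Discrete sewing lemma.** Let `ω` be a control on the discrete simplex of the uniform
partition `t k = k * (T / n)` of `[0, T]`, let `E` be a Banach space, `μ > 1`, and let
`R` satisfy `‖R (t k) (t (k+1))‖ ≤ ω (t k) (t (k+1)) ^ μ` for each step, together with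
`‖δR_{sut}‖ ≤ ω (s, t) ^ μ` for all grid points `s ≤ u ≤ t`.  Then
`‖R (s, t)‖ ≤ K_μ * ω (s, t) ^ μ` for all grid points `s ≤ t`, where
`K_μ = 2 ^ μ * ∑_{l ≥ 1} l ^ (-μ)`. -/
theorem discrete_sewing_lemma
    (T : ℝ) (hT : 0 < T) (n : ℕ) (hn : 1 ≤ n)
    (t : ℕ → ℝ) (ht : ∀ k, t k = (k : ℝ) * (T / n))
    {E : Type*} [NormedAddCommGroup E] [NormedSpace ℝ E] [CompleteSpace E]
    (μ : ℝ) (hμ : 1 < μ)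
    (ω : ℝ → ℝ → ℝ)
    (hω_nonneg : ∀ i j : ℕ, i ≤ j → j ≤ n → 0 ≤ ω (t i) (t j))
    (hω_super : ∀ i j k : ℕ, i ≤ j → j ≤ k → k ≤ n →
      ω (t i) (t j) + ω (t j) (t k) ≤ ω (t i) (t k))
    (R : ℝ → ℝ → E)
    (hR_step : ∀ k : ℕ, k < n → ‖R (t k) (t (k + 1))‖ ≤ ω (t k) (t (k + 1)) ^ μ)
    (hR_delta : ∀ i j k : ℕ, i ≤ j → j ≤ k → k ≤ n →
      ‖R (t i) (t k) - R (t i) (t j) - R (t j) (t k)‖ ≤ ω (t i) (t k) ^ μ) :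
    ∀ i j : ℕ, i ≤ j → j ≤ n →
      ‖R (t i) (t j)‖ ≤
        ((2 : ℝ) ^ μ * ∑' l : ℕ, ((l : ℝ) + 1) ^ (-μ)) * ω (t i) (t j) ^ μ := by
  intro i j hij hjn
  have hμ0 : (0:ℝ) ≤ μ := by linarith
  set ω' : ℕ → ℕ → ℝ := fun a b => ω (t a) (t b) with hω'def
  set R' : ℕ → ℕ → E := fun a b => R (t a) (t b) with hR'def
  rcases eq_or_lt_of_le hij with heq | hlt
  · -- i = j
    subst heq
    have hii : ω' i i = 0 := by
      have h1 := hω_super i i i le_rfl le_rfl hjn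
      have h2 := hω_nonneg i i le_rfl hjn
      simp only [hω'def]; linarith
    have hd := hR_delta i i i le_rfl le_rfl hjn
    have : ‖R (t i) (t i)‖ ≤ ω (t i) (t i) ^ μ := by
      have : R (t i) (t i) - R (t i) (t i) - R (t i) (t i) = -(R (t i) (t i)) := by abel
      rwa [this, norm_neg] at hd
    have hz : ω (t i) (t i) = 0 := hii
    rw [hz, Real.zero_rpow (by linarith : μ ≠ 0)] at this ⊢
    rw [mul_zero]
    exact this
  · -- i < j
    set m := j - i with hmdef
    have hm1 : 1 ≤ m := by omega
    have hjm : j = i + m := by omega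
    set c : ℕ → ℕ := fun a => i + min a m with hcdef
    have hc : Monotone c := fun x y hxy => by
      simp only [hcdef]; exact Nat.add_le_add_left (min_le_min hxy le_rfl) i
    have hc0 : c 0 = i := by simp [hcdef]
    have hcm : c m = j := by simp [hcdef]; omega
    have hca : ∀ a, a ≤ m → c a = i + a := by
      intro a ha; simp [hcdef, min_eq_left ha]
    have hpart := sewing_partition n μ ω' hω_nonneg hω_super R' hμ hR_delta m hm1 c hc
      (by rw [hcm]; exact hjn)
    rw [hc0, hcm] at hpart
    -- bound the Riemann-type sum
    have hstepsum : ‖∑ a ∈ range m, R' (c a) (c (a + 1))‖ ≤ ω' i j ^ μ := by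
      calc ‖∑ a ∈ range m, R' (c a) (c (a + 1))‖
          ≤ ∑ a ∈ range m, ‖R' (c a) (c (a + 1))‖ := norm_sum_le _ _
        _ ≤ ∑ a ∈ range m, ω' (c a) (c (a + 1)) ^ μ := by
            apply Finset.sum_le_sum
            intro a ha
            simp only [Finset.mem_range] at ha
            rw [hca a (by omega), hca (a + 1) (by omega)]
            have := hR_step (i + a) (by omega)
            simp only [hR'def, hω'def]
            rw [← Nat.add_assoc]; exact this
        _ ≤ (∑ a ∈ range m, ω' (c a) (c (a + 1))) ^ μ := by
            apply my_sum_rpow (le_of_lt hμ)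
            intro a
            exact hω_nonneg (c a) (c (a + 1)) (hc (Nat.le_succ a))
              (le_trans (by simp [hcdef]; omega) hjn)
        _ ≤ ω' i j ^ μ := by
            apply Real.rpow_le_rpow
            · apply Finset.sum_nonneg
              intro a _
              exact hω_nonneg (c a) (c (a + 1)) (hc (Nat.le_succ a))
                (le_trans (by simp [hcdef]; omega) hjn)
            · have := chain_omega n ω' hω_nonneg hω_super c hc m (by rw [hcm]; exact hjn)
              rwa [hc0, hcm] at this
            · exact hμ0
    have hωnn : 0 ≤ ω' i j := hω_nonneg i j hij hjn
    have hcomb : ‖R' i j‖ ≤ (1 + ∑ l ∈ Icc 1 (m - 1), sewG μ l) * ω' i j ^ μ := by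
      calc ‖R' i j‖ = ‖(R' i j - ∑ a ∈ range m, R' (c a) (c (a + 1)))
            + ∑ a ∈ range m, R' (c a) (c (a + 1))‖ := by congr 1; abel
        _ ≤ ‖R' i j - ∑ a ∈ range m, R' (c a) (c (a + 1))‖
            + ‖∑ a ∈ range m, R' (c a) (c (a + 1))‖ := norm_add_le _ _
        _ ≤ (∑ l ∈ Icc 1 (m - 1), sewG μ l) * ω' i j ^ μ + ω' i j ^ μ :=
            add_le_add hpart hstepsum
        _ = (1 + ∑ l ∈ Icc 1 (m - 1), sewG μ l) * ω' i j ^ μ := by ring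
    refine le_trans hcomb ?_
    exact mul_le_mul_of_nonneg_right (sewK_bound hμ (m - 1)) (Real.rpow_nonneg hωnn μ)
end

section
/- Let (Ω, ℱ, ℙ) be a probability space, let p ≥ 1, and let α, β > 0 with α + β > 1. Let f and g assign to each grid point t_k a random variable in L^{2p}(Ω), and suppose there is C ≥ 0 such that ‖f_t − f_s‖_{L^{2p}} ≤ C|t − s|^α and ‖g_t − g_s‖_{L^{2p}} ≤ C|t − s|^β for all grid points s ≤ t. For grid points s ≤ t define J_{st} := ∑_{s ≤ t_k < t} (f_{t_k} − f_s)(g_{t_{k+1}} − g_{t_k}). Then there exists a constant C′ depending only on C, α, β and p (and in particular independent of n, s, t) such that ‖J_{st}‖_{L^p} ≤ C′ (t − s)^{α+β} for all grid points s ≤ t. -/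
open MeasureTheory ENNReal

private lemma tele_sum {R : Type*} [AddCommGroup R] (G : ℕ → R) {a j : ℕ} (haj : a ≤ j) :
    ∑ k ∈ Finset.Ico a j, (G (k + 1) - G k) = G j - G a := by
  rw [Finset.sum_Ico_eq_sub _ haj, Finset.sum_range_sub, Finset.sum_range_sub]
  abel

private lemma sum_decomp {R : Type*} [CommRing R] (F G : ℕ → R) {i a j : ℕ}
    (hia : i ≤ a) (haj : a ≤ j) :
    ∑ k ∈ Finset.Ico i j, (F k - F i) * (G (k + 1) - G k)
      = (∑ k ∈ Finset.Ico i a, (F k - F i) * (G (k + 1) - G k))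
        + ((∑ k ∈ Finset.Ico a j, (F k - F a) * (G (k + 1) - G k))
          + (F a - F i) * (G j - G a)) := by
  rw [← Finset.sum_Ico_consecutive _ hia haj]
  have h1 : ∀ k ∈ Finset.Ico a j, (F k - F i) * (G (k + 1) - G k)
      = (F k - F a) * (G (k + 1) - G k) + (F a - F i) * (G (k + 1) - G k) := fun k _ => by ring
  rw [Finset.sum_congr rfl h1, Finset.sum_add_distrib, ← Finset.mul_sum, tele_sum G haj]

private lemma key_ineq {α β x y : ℝ} (hα : 0 < α) (hβ : 0 < β) (hγ : 1 < α + β)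
    (hy : 0 < y) (hyx : y ≤ x) (hx2 : x ≤ 2 * y) :
    2 / (α + β - 1) * x ^ (α + β) + (2 / (α + β - 1) * y ^ (α + β) + x ^ α * y ^ β)
      ≤ 2 / (α + β - 1) * (x + y) ^ (α + β) := by
  have hx : 0 < x := hy.trans_le hyx
  set γ := α + β with hγdef
  have h1 : (0:ℝ) < γ - 1 := by simp only [hγdef]; linarith
  set K := 2 / (γ - 1) with hKdef
  have hK : 0 < K := by positivity
  have hKγ : K * γ = K + 2 := by
    have h2 : 2 / (γ - 1) * (γ - 1) = 2 := div_mul_cancel₀ 2 h1.ne'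
    rw [hKdef]
    linear_combination h2
  have e2 : x ^ γ = x ^ (γ - 1) * x := by
    rw [← Real.rpow_add_one hx.ne' (γ - 1), sub_add_cancel]
  have bern : x ^ γ + γ * (x ^ (γ - 1) * y) ≤ (x + y) ^ γ := by
    have hb := one_add_mul_self_le_rpow_one_add (s := y / x)
      (le_trans (by norm_num) (by positivity : (0:ℝ) ≤ y / x)) (by linarith : (1:ℝ) ≤ γ)
    have hxγ : (0:ℝ) < x ^ γ := Real.rpow_pos_of_pos hx γ
    have e1 : (1 + y / x) ^ γ * x ^ γ = (x + y) ^ γ := by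
      rw [← Real.mul_rpow (by positivity) hx.le]
      congr 1
      field_simp
    calc x ^ γ + γ * (x ^ (γ - 1) * y)
        = (1 + γ * (y / x)) * x ^ γ := by rw [e2]; field_simp
      _ ≤ (1 + y / x) ^ γ * x ^ γ := mul_le_mul_of_nonneg_right hb hxγ.le
      _ = (x + y) ^ γ := e1
  have hyγ : y ^ γ ≤ x ^ (γ - 1) * y := by
    have e3 : y ^ γ = y ^ (γ - 1) * y := by
      rw [← Real.rpow_add_one hy.ne' (γ - 1), sub_add_cancel]
    rw [e3]
    exact mul_le_mul_of_nonneg_right (Real.rpow_le_rpow hy.le hyx h1.le) hy.le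
  have hcross : x ^ α * y ^ β ≤ 2 * (x ^ (γ - 1) * y) := by
    have c1 : x ^ α * y ^ β ≤ x ^ γ := by
      calc x ^ α * y ^ β ≤ x ^ α * x ^ β :=
            mul_le_mul_of_nonneg_left (Real.rpow_le_rpow hy.le hyx hβ.le)
              (Real.rpow_nonneg hx.le α)
        _ = x ^ γ := (Real.rpow_add hx α β).symm
    have h0 : (0:ℝ) ≤ x ^ (γ - 1) := Real.rpow_nonneg hx.le _
    have c2 : x ^ γ ≤ 2 * (x ^ (γ - 1) * y) := by
      rw [e2]
      nlinarith
    linarith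
  have hb2 := mul_le_mul_of_nonneg_left bern hK.le
  have hy2 := mul_le_mul_of_nonneg_left hyγ hK.le
  have t0 : (0:ℝ) ≤ x ^ (γ - 1) * y := mul_nonneg (Real.rpow_nonneg hx.le _) hy.le
  calc K * x ^ γ + (K * y ^ γ + x ^ α * y ^ β)
      ≤ K * x ^ γ + (K * (x ^ (γ - 1) * y) + 2 * (x ^ (γ - 1) * y)) := by linarith
    _ = K * (x ^ γ + γ * (x ^ (γ - 1) * y)) := by linear_combination (-(x ^ (γ - 1) * y)) * hKγ
    _ ≤ K * (x + y) ^ γ := hb2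

set_option maxHeartbeats 1600000 in
/-- Let `(Ω, ℱ, ℙ)` be a probability space, `p ≥ 1`, `α, β > 0` with `α + β > 1`, and let
`f`, `g` assign to each grid point `t k = k * (T / n)` an `L^{2p}` random variable with
`‖f_t − f_s‖_{L^{2p}} ≤ C |t − s|^α` and `‖g_t − g_s‖_{L^{2p}} ≤ C |t − s|^β` for all grid
points `s ≤ t`.  With `J_{st} := ∑_{s ≤ t_k < t} (f_{t_k} − f_s)(g_{t_{k+1}} − g_{t_k})`,
there is a constant `C'` depending only on `C, α, β, p` (in particular independent of `n`,
`s` and `t`) such that `‖J_{st}‖_{L^p} ≤ C' (t − s)^{α+β}` for all grid points `s ≤ t`. -/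
theorem weighted_sum_Lp_bound
    (T : ℝ) (hT : 0 < T)
    (p α β C : ℝ) (hp : 1 ≤ p) (hα : 0 < α) (hβ : 0 < β) (hαβ : 1 < α + β) (hC : 0 ≤ C) :
    ∃ C' : ℝ, 0 ≤ C' ∧
      ∀ (Ω : Type) (_ : MeasureSpace Ω)
        (_ : IsProbabilityMeasure (volume : Measure Ω))
        (f g : ℝ → Ω → ℝ) (n : ℕ), 1 ≤ n →
        (∀ i j : ℕ, i ≤ j → j ≤ n →
          MemLp (fun ω => f ((j : ℝ) * (T / n)) ω - f ((i : ℝ) * (T / n)) ω)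
              (ENNReal.ofReal (2 * p)) volume ∧
          eLpNorm (fun ω => f ((j : ℝ) * (T / n)) ω - f ((i : ℝ) * (T / n)) ω)
              (ENNReal.ofReal (2 * p)) volume
            ≤ ENNReal.ofReal (C * ((j : ℝ) * (T / n) - (i : ℝ) * (T / n)) ^ α)) →
        (∀ i j : ℕ, i ≤ j → j ≤ n →
          MemLp (fun ω => g ((j : ℝ) * (T / n)) ω - g ((i : ℝ) * (T / n)) ω)
              (ENNReal.ofReal (2 * p)) volume ∧
          eLpNorm (fun ω => g ((j : ℝ) * (T / n)) ω - g ((i : ℝ) * (T / n)) ω)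
              (ENNReal.ofReal (2 * p)) volume
            ≤ ENNReal.ofReal (C * ((j : ℝ) * (T / n) - (i : ℝ) * (T / n)) ^ β)) →
        ∀ i j : ℕ, i ≤ j → j ≤ n →
          eLpNorm
              (fun ω => ∑ k ∈ Finset.Ico i j,
                (f ((k : ℝ) * (T / n)) ω - f ((i : ℝ) * (T / n)) ω) *
                  (g (((k : ℝ) + 1) * (T / n)) ω - g ((k : ℝ) * (T / n)) ω))
              (ENNReal.ofReal p) volume
            ≤ ENNReal.ofReal (C' * ((j : ℝ) * (T / n) - (i : ℝ) * (T / n)) ^ (α + β)) := by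
  have hγ1 : (0:ℝ) < α + β - 1 := by linarith
  refine ⟨2 / (α + β - 1) * C ^ 2, by positivity, ?_⟩
  intro Ω _ hprob f g n hn hf hg
  have hn0 : (0:ℝ) < (n:ℝ) := by exact_mod_cast hn
  set Δ : ℝ := T / n with hΔdef
  have hΔ : 0 < Δ := div_pos hT hn0
  set P : ℝ≥0∞ := ENNReal.ofReal p with hPdef
  have hP1 : 1 ≤ P := by rw [hPdef]; exact ENNReal.one_le_ofReal.mpr hp
  have hQ : ENNReal.ofReal (2 * p) = 2 * P := by
    rw [hPdef, ENNReal.ofReal_mul (by norm_num : (0:ℝ) ≤ 2), ENNReal.ofReal_ofNat]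
  have hpqr : 1 / P = 1 / (2 * P) + 1 / (2 * P) := by
    rw [ENNReal.div_add_div_same]
    have h11 : (1:ℝ≥0∞) + 1 = 2 * 1 := by norm_num
    rw [h11, ENNReal.mul_div_mul_left 1 P two_ne_zero (by norm_num)]
  have holder : ∀ u v : Ω → ℝ, AEStronglyMeasurable u volume → AEStronglyMeasurable v volume →
      eLpNorm (fun ω => u ω * v ω) P volume
        ≤ eLpNorm u (2 * P) volume * eLpNorm v (2 * P) volume := by
    intro u v hu hv
    haveI : ENNReal.HolderTriple (2 * P) (2 * P) P := ⟨by simpa [one_div] using hpqr.symm⟩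
    simpa using eLpNorm_le_eLpNorm_mul_eLpNorm'_of_norm hu hv (· * ·) 1
      (Filter.Eventually.of_forall fun ω => by simp [norm_mul]) (p := 2 * P) (q := 2 * P) (r := P)
  have hfm : ∀ i k : ℕ, i ≤ k → k ≤ n →
      AEStronglyMeasurable (fun ω => f ((k : ℝ) * Δ) ω - f ((i : ℝ) * Δ) ω) volume :=
    fun i k h1 h2 => (hf i k h1 h2).1.1
  have hgm : ∀ i k : ℕ, i ≤ k → k ≤ n →
      AEStronglyMeasurable (fun ω => g ((k : ℝ) * Δ) ω - g ((i : ℝ) * Δ) ω) volume :=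
    fun i k h1 h2 => (hg i k h1 h2).1.1
  suffices H : ∀ N i j : ℕ, j - i = N → i ≤ j → j ≤ n →
      eLpNorm (fun ω => ∑ k ∈ Finset.Ico i j,
          (f ((k : ℝ) * Δ) ω - f ((i : ℝ) * Δ) ω) *
            (g (((k + 1 : ℕ) : ℝ) * Δ) ω - g ((k : ℝ) * Δ) ω)) P volume
        ≤ ENNReal.ofReal (2 / (α + β - 1) * C ^ 2 * ((j : ℝ) * Δ - (i : ℝ) * Δ) ^ (α + β)) by
    intro i j hij hjn
    have h := H (j - i) i j rfl hij hjn
    push_cast at h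
    exact h
  intro N
  induction N using Nat.strong_induction_on with
  | _ N IH =>
  intro i j hN hij hjn
  by_cases hN2 : N < 2
  · have hz : (fun ω => ∑ k ∈ Finset.Ico i j,
        (f ((k : ℝ) * Δ) ω - f ((i : ℝ) * Δ) ω) *
          (g (((k + 1 : ℕ) : ℝ) * Δ) ω - g ((k : ℝ) * Δ) ω)) = (0 : Ω → ℝ) := by
      funext ω
      rcases (by omega : j = i ∨ j = i + 1) with h | h <;> subst h <;>
        simp [Finset.sum_Ico_succ_top, le_refl]
    rw [hz, eLpNorm_zero]
    exact zero_le
  · push_neg at hN2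
    set a := i + (N + 1) / 2 with hadef
    have hia : i ≤ a := by omega
    have haj : a ≤ j := by omega
    have han : a ≤ n := le_trans haj hjn
    have hLN : a - i < N := by omega
    have hRN : j - a < N := by omega
    have haltj : a < j := by omega
    have hRL : j - a ≤ a - i := by omega
    have hL2R : a - i ≤ 2 * (j - a) := by omega
    -- real lengths
    have hcast1 : ((a : ℝ) - (i : ℝ)) = ((a - i : ℕ) : ℝ) := by
      rw [Nat.cast_sub hia]
    have hcast2 : ((j : ℝ) - (a : ℝ)) = ((j - a : ℕ) : ℝ) := by
      rw [Nat.cast_sub haj]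
    have hy0 : 0 < (j : ℝ) * Δ - (a : ℝ) * Δ := by
      have h1 : (a : ℝ) < (j : ℝ) := by exact_mod_cast haltj
      nlinarith
    have hyx : (j : ℝ) * Δ - (a : ℝ) * Δ ≤ (a : ℝ) * Δ - (i : ℝ) * Δ := by
      have h2 : ((j - a : ℕ) : ℝ) ≤ ((a - i : ℕ) : ℝ) := Nat.cast_le.mpr hRL
      rw [← hcast1, ← hcast2] at h2
      nlinarith [mul_nonneg (sub_nonneg.mpr h2) hΔ.le]
    have hx2 : (a : ℝ) * Δ - (i : ℝ) * Δ ≤ 2 * ((j : ℝ) * Δ - (a : ℝ) * Δ) := by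
      have h2 : ((a - i : ℕ) : ℝ) ≤ 2 * ((j - a : ℕ) : ℝ) := by exact_mod_cast hL2R
      rw [← hcast1, ← hcast2] at h2
      nlinarith [mul_nonneg (sub_nonneg.mpr h2) hΔ.le]
    have hx0 : 0 ≤ (a : ℝ) * Δ - (i : ℝ) * Δ := le_trans hy0.le hyx
    set A : Ω → ℝ := fun ω => ∑ k ∈ Finset.Ico i a,
        (f ((k : ℝ) * Δ) ω - f ((i : ℝ) * Δ) ω) *
          (g (((k + 1 : ℕ) : ℝ) * Δ) ω - g ((k : ℝ) * Δ) ω) with hAdef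
    set B : Ω → ℝ := fun ω => ∑ k ∈ Finset.Ico a j,
        (f ((k : ℝ) * Δ) ω - f ((a : ℝ) * Δ) ω) *
          (g (((k + 1 : ℕ) : ℝ) * Δ) ω - g ((k : ℝ) * Δ) ω) with hBdef
    set X : Ω → ℝ := fun ω =>
        (f ((a : ℝ) * Δ) ω - f ((i : ℝ) * Δ) ω) *
          (g ((j : ℝ) * Δ) ω - g ((a : ℝ) * Δ) ω) with hXdef
    have hfun : (fun ω => ∑ k ∈ Finset.Ico i j,
        (f ((k : ℝ) * Δ) ω - f ((i : ℝ) * Δ) ω) *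
          (g (((k + 1 : ℕ) : ℝ) * Δ) ω - g ((k : ℝ) * Δ) ω)) = A + (B + X) := by
      funext ω
      simp only [hAdef, hBdef, hXdef, Pi.add_apply]
      exact sum_decomp (fun k : ℕ => f ((k : ℝ) * Δ) ω) (fun k : ℕ => g ((k : ℝ) * Δ) ω) hia haj
    have hAm : AEStronglyMeasurable A volume := by
      rw [hAdef]
      refine Finset.aestronglyMeasurable_fun_sum _ fun k hk => ?_
      have hk' := Finset.mem_Ico.mp hk
      exact (hfm i k hk'.1 (by omega)).mul (hgm k (k + 1) (Nat.le_succ k) (by omega))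
    have hBm : AEStronglyMeasurable B volume := by
      rw [hBdef]
      refine Finset.aestronglyMeasurable_fun_sum _ fun k hk => ?_
      have hk' := Finset.mem_Ico.mp hk
      exact (hfm a k hk'.1 (by omega)).mul (hgm k (k + 1) (Nat.le_succ k) (by omega))
    have hXm : AEStronglyMeasurable X volume := by
      rw [hXdef]
      exact (hfm i a hia han).mul (hgm a j haj hjn)
    have hfb := (hf i a hia han).2
    have hgb := (hg a j haj hjn).2
    rw [hQ] at hfb hgb
    have hXb : eLpNorm X P volume ≤ ENNReal.ofReal
        ((C * ((a : ℝ) * Δ - (i : ℝ) * Δ) ^ α) * (C * ((j : ℝ) * Δ - (a : ℝ) * Δ) ^ β)) := by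
      calc eLpNorm X P volume
          ≤ eLpNorm (fun ω => f ((a : ℝ) * Δ) ω - f ((i : ℝ) * Δ) ω) (2 * P) volume *
              eLpNorm (fun ω => g ((j : ℝ) * Δ) ω - g ((a : ℝ) * Δ) ω) (2 * P) volume := by
            rw [hXdef]
            exact holder _ _ (hfm i a hia han) (hgm a j haj hjn)
        _ ≤ ENNReal.ofReal (C * ((a : ℝ) * Δ - (i : ℝ) * Δ) ^ α) *
              ENNReal.ofReal (C * ((j : ℝ) * Δ - (a : ℝ) * Δ) ^ β) := mul_le_mul' hfb hgb
        _ = ENNReal.ofReal ((C * ((a : ℝ) * Δ - (i : ℝ) * Δ) ^ α) *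
              (C * ((j : ℝ) * Δ - (a : ℝ) * Δ) ^ β)) :=
            (ENNReal.ofReal_mul (mul_nonneg hC (Real.rpow_nonneg hx0 α))).symm
    have hAb : eLpNorm A P volume ≤ ENNReal.ofReal
        (2 / (α + β - 1) * C ^ 2 * ((a : ℝ) * Δ - (i : ℝ) * Δ) ^ (α + β)) := by
      rw [hAdef]
      exact IH (a - i) hLN i a rfl hia han
    have hBb : eLpNorm B P volume ≤ ENNReal.ofReal
        (2 / (α + β - 1) * C ^ 2 * ((j : ℝ) * Δ - (a : ℝ) * Δ) ^ (α + β)) := by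
      rw [hBdef]
      exact IH (j - a) hRN a j rfl haj hjn
    rw [hfun]
    have hu0 : (0:ℝ) ≤ 2 / (α + β - 1) * C ^ 2 * ((a : ℝ) * Δ - (i : ℝ) * Δ) ^ (α + β) := by
      have := Real.rpow_nonneg hx0 (α + β); positivity
    have hv0 : (0:ℝ) ≤ 2 / (α + β - 1) * C ^ 2 * ((j : ℝ) * Δ - (a : ℝ) * Δ) ^ (α + β) := by
      have := Real.rpow_nonneg hy0.le (α + β); positivity
    have hw0 : (0:ℝ) ≤ (C * ((a : ℝ) * Δ - (i : ℝ) * Δ) ^ α) *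
        (C * ((j : ℝ) * Δ - (a : ℝ) * Δ) ^ β) :=
      mul_nonneg (mul_nonneg hC (Real.rpow_nonneg hx0 α))
        (mul_nonneg hC (Real.rpow_nonneg hy0.le β))
    calc eLpNorm (A + (B + X)) P volume
        ≤ eLpNorm A P volume + eLpNorm (B + X) P volume :=
          eLpNorm_add_le hAm (hBm.add hXm) hP1
      _ ≤ eLpNorm A P volume + (eLpNorm B P volume + eLpNorm X P volume) :=
          add_le_add_right (eLpNorm_add_le hBm hXm hP1) _
      _ ≤ ENNReal.ofReal (2 / (α + β - 1) * C ^ 2 * ((a : ℝ) * Δ - (i : ℝ) * Δ) ^ (α + β)) +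
            (ENNReal.ofReal (2 / (α + β - 1) * C ^ 2 * ((j : ℝ) * Δ - (a : ℝ) * Δ) ^ (α + β)) +
              ENNReal.ofReal ((C * ((a : ℝ) * Δ - (i : ℝ) * Δ) ^ α) *
                (C * ((j : ℝ) * Δ - (a : ℝ) * Δ) ^ β))) :=
          add_le_add hAb (add_le_add hBb hXb)
      _ ≤ ENNReal.ofReal (2 / (α + β - 1) * C ^ 2 * ((j : ℝ) * Δ - (i : ℝ) * Δ) ^ (α + β)) := by
          rw [← ENNReal.ofReal_add hv0 hw0, ← ENNReal.ofReal_add hu0 (add_nonneg hv0 hw0)]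
          apply ENNReal.ofReal_le_ofReal
          have hxy : (j : ℝ) * Δ - (i : ℝ) * Δ =
              ((a : ℝ) * Δ - (i : ℝ) * Δ) + ((j : ℝ) * Δ - (a : ℝ) * Δ) := by ring
          rw [hxy]
          have hk := key_ineq hα hβ hαβ hy0 hyx hx2
          have hk2 := mul_le_mul_of_nonneg_left hk (by positivity : (0:ℝ) ≤ C ^ 2)
          linarith [hk2]
end

section
/- Let p, p′ ≥ 1 with 1/p + 1/p′ > 1 and let μ be any number with 1 < μ < 1/p + 1/p′. Let h : [0,T] → ℝ have finite p′-variation and x : [0,T] → ℝ have finite p-variation. Then for all grid points u ≤ v, |∑_{u ≤ t_k < v} (h(t_k) − h(u)) · (x(t_{k+1}) − x(t_k))| ≤ K_μ · ‖h‖_{p′-var,[u,v]} · ‖x‖_{p-var,[u,v]}, where K_μ = 2^μ ∑_{l=1}^∞ l^{−μ}. -/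
/-- The set of partition sums `(∑ |f(σ(i+1)) − f(σ i)|^q)^{1/q}` over all finite partitions
`s = σ 0 ≤ σ 1 ≤ ⋯ ≤ σ m = t` of `[s, t]`. -/
def qVarSums (q : ℝ) (f : ℝ → ℝ) (s t : ℝ) : Set ℝ :=
  {v : ℝ | ∃ (m : ℕ) (σ : ℕ → ℝ), σ 0 = s ∧ σ m = t ∧
    (∀ i, i < m → σ i ≤ σ (i + 1)) ∧
    v = (∑ i ∈ Finset.range m, |f (σ (i + 1)) - f (σ i)| ^ q) ^ (1 / q)}

/-- The `q`-variation seminorm `‖f‖_{q-var,[s,t]}`. -/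
noncomputable def qVar (q : ℝ) (f : ℝ → ℝ) (s t : ℝ) : ℝ :=
  sSup (qVarSums q f s t)

open Finset

private lemma mem_qVarSums {q : ℝ} {f : ℝ → ℝ} {m : ℕ} {σ : ℕ → ℝ}
    (hmono : ∀ i, i < m → σ i ≤ σ (i + 1)) :
    (∑ i ∈ range m, |f (σ (i + 1)) - f (σ i)| ^ q) ^ (1 / q) ∈ qVarSums q f (σ 0) (σ m) :=
  ⟨m, σ, rfl, rfl, hmono, rfl⟩

private lemma qVar_nonneg' {q : ℝ} {f : ℝ → ℝ} {m : ℕ} {σ : ℕ → ℝ}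
    (hmono : ∀ i, i < m → σ i ≤ σ (i + 1))
    (hbdd : BddAbove (qVarSums q f (σ 0) (σ m))) : 0 ≤ qVar q f (σ 0) (σ m) :=
  le_trans (Real.rpow_nonneg (Finset.sum_nonneg fun _ _ =>
      Real.rpow_nonneg (abs_nonneg _) q) _)
    (le_csSup hbdd (mem_qVarSums hmono))

private lemma sum_le_qVar_rpow {q : ℝ} (hq : 0 < q) {f : ℝ → ℝ} {m : ℕ} {σ : ℕ → ℝ}
    (hmono : ∀ i, i < m → σ i ≤ σ (i + 1))
    (hbdd : BddAbove (qVarSums q f (σ 0) (σ m))) :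
    ∑ i ∈ range m, |f (σ (i + 1)) - f (σ i)| ^ q ≤ (qVar q f (σ 0) (σ m)) ^ q := by
  set X := ∑ i ∈ range m, |f (σ (i + 1)) - f (σ i)| ^ q with hX
  have hX0 : 0 ≤ X := Finset.sum_nonneg fun i _ => Real.rpow_nonneg (abs_nonneg _) q
  have h1 : X ^ (1 / q) ≤ qVar q f (σ 0) (σ m) := le_csSup hbdd (mem_qVarSums hmono)
  have h2 : (X ^ (1 / q)) ^ q ≤ (qVar q f (σ 0) (σ m)) ^ q :=
    Real.rpow_le_rpow (Real.rpow_nonneg hX0 _) h1 hq.le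
  calc X = (X ^ (1 / q)) ^ q := by
        rw [← Real.rpow_mul hX0, one_div, inv_mul_cancel₀ hq.ne', Real.rpow_one]
    _ ≤ _ := h2

private lemma sigma_mono {m : ℕ} {σ : ℕ → ℝ} (hmono : ∀ i, i < m → σ i ≤ σ (i + 1)) :
    ∀ i j, i ≤ j → j ≤ m → σ i ≤ σ j := by
  intro i j hij hjm
  induction j with
  | zero => simp [Nat.le_zero.mp hij]
  | succ j ih =>
    rcases Nat.lt_or_ge i (j + 1) with hlt | hge
    · exact le_trans (ih (by omega) (by omega)) (hmono j (by omega))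
    · have : i = j + 1 := by omega
      simp [this]
private lemma bddAbove_qVarSums_sub {q : ℝ} (hq : 1 ≤ q) {f : ℝ → ℝ} {T A B : ℝ}
    (hA : 0 ≤ A) (hB : B ≤ T) (hbdd : BddAbove (qVarSums q f 0 T)) :
    BddAbove (qVarSums q f A B) := by
  obtain ⟨M, hM⟩ := hbdd
  refine ⟨M, fun w hw => ?_⟩
  obtain ⟨m, σ, hσ0, hσm, hmono, rfl⟩ := hw
  set τ : ℕ → ℝ := fun j => if j = 0 then 0 else if j ≤ m + 1 then σ (j - 1) else T with hτ
  have hτ0 : τ 0 = 0 := rfl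
  have hτmid : ∀ j, 1 ≤ j → j ≤ m + 1 → τ j = σ (j - 1) := by
    intro j h1 h2
    simp only [hτ]
    rw [if_neg (by omega), if_pos h2]
  have hτend : τ (m + 2) = T := by
    simp only [hτ]
    rw [if_neg (by omega), if_neg (by omega)]
  have hτmono : ∀ i, i < m + 2 → τ i ≤ τ (i + 1) := by
    intro i hi
    rcases Nat.eq_zero_or_pos i with rfl | hi0
    · rw [hτ0, hτmid 1 le_rfl (by omega)]
      simpa [hσ0] using hA
    · rcases Nat.lt_or_ge i (m + 1) with hlt | hge
      · rw [hτmid i hi0 (by omega), hτmid (i+1) (by omega) (by omega)]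
        have := hmono (i - 1) (by omega)
        have e : i - 1 + 1 = i + 1 - 1 := by omega
        rwa [e] at this
      · have : i = m + 1 := by omega
        subst this
        rw [hτmid (m+1) (by omega) le_rfl, hτend]
        simp only [Nat.add_sub_cancel]
        rw [hσm]; exact hB
  have key : (∑ i ∈ range m, |f (σ (i + 1)) - f (σ i)| ^ q) ^ (1 / q)
      ≤ (∑ i ∈ range (m + 2), |f (τ (i + 1)) - f (τ i)| ^ q) ^ (1 / q) := by
    apply Real.rpow_le_rpow (Finset.sum_nonneg fun i _ => Real.rpow_nonneg (abs_nonneg _) q)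
      _ (by positivity)
    have hsub : ∑ i ∈ range m, |f (σ (i + 1)) - f (σ i)| ^ q
        = ∑ j ∈ Ico 1 (m + 1), |f (τ (j + 1)) - f (τ j)| ^ q := by
      rw [Finset.sum_Ico_eq_sum_range]
      apply Finset.sum_congr (by rw [Nat.add_sub_cancel])
      intro i hi
      rw [Finset.mem_range] at hi
      have hi' : i < m := by omega
      have e1 : τ (1 + i + 1) = σ (i + 1) := by
        rw [hτmid _ (by omega) (by omega)]; congr 1; omega
      have e2 : τ (1 + i) = σ i := by
        rw [hτmid _ (by omega) (by omega)]; congr 1; omega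
      rw [e1, e2]
    rw [hsub]
    apply Finset.sum_le_sum_of_subset_of_nonneg
    · intro j hj
      rw [Finset.mem_Ico] at hj; rw [Finset.mem_range]; omega
    · intro i _ _; exact Real.rpow_nonneg (abs_nonneg _) q
  refine le_trans key (hM ?_)
  exact ⟨m + 2, τ, hτ0, hτend, hτmono, rfl⟩

private lemma exists_good_index (p p' μ : ℝ) (hp : 1 ≤ p) (hp' : 1 ≤ p')
    (hμ : 1 < μ) (hμ' : μ < 1 / p + 1 / p')
    (k : ℕ) (hk : 1 ≤ k) (a b : ℕ → ℝ) (ha : ∀ i, 0 ≤ a i) (hb : ∀ i, 0 ≤ b i)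
    (A B : ℝ) (hA : 0 ≤ A) (hB : 0 ≤ B)
    (hsa : ∑ i ∈ Finset.Icc 1 k, a i ^ p' ≤ A ^ p')
    (hsb : ∑ i ∈ Finset.Icc 1 k, b i ^ p ≤ B ^ p) :
    ∃ i ∈ Finset.Icc 1 k, a i * b i ≤ 2 ^ μ * (k : ℝ) ^ (-μ) * (A * B) := by
  have hp0 : (0:ℝ) < p := by linarith
  have hp'0 : (0:ℝ) < p' := by linarith
  rcases eq_or_lt_of_le hk with hk1 | hk2
  · -- k = 1
    subst hk1
    refine ⟨1, by simp, ?_⟩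
    simp only [Finset.Icc_self, Finset.sum_singleton] at hsa hsb
    have ha1 : a 1 ≤ A := (Real.rpow_le_rpow_iff (ha 1) hA hp'0).mp hsa
    have hb1 : b 1 ≤ B := (Real.rpow_le_rpow_iff (hb 1) hB hp0).mp hsb
    have h1 : a 1 * b 1 ≤ A * B := mul_le_mul ha1 hb1 (hb 1) hA
    have h2 : (1:ℝ) ≤ 2 ^ μ * ((1:ℕ) : ℝ) ^ (-μ) := by
      simp only [Nat.cast_one, Real.one_rpow, mul_one]
      exact Real.one_le_rpow one_le_two (by linarith)
    calc a 1 * b 1 ≤ A * B := h1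
      _ = 1 * (A * B) := by ring
      _ ≤ 2 ^ μ * ((1:ℕ):ℝ) ^ (-μ) * (A * B) :=
        mul_le_mul_of_nonneg_right h2 (mul_nonneg hA hB)
    -- note: goal has (k : ℝ) with k = 1
  · -- 2 ≤ k
    have hk2' : 2 ≤ k := hk2
    have hkR : (0:ℝ) < (k:ℝ) := by positivity
    have h2k0 : (0:ℝ) < 2 / (k:ℝ) := by positivity
    have h2k1 : 2 / (k:ℝ) ≤ 1 := by
      rw [div_le_one hkR]; exact_mod_cast hk2'
    set cA := (2 / (k:ℝ)) ^ (1 / p') * A with hcA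
    set cB := (2 / (k:ℝ)) ^ (1 / p) * B with hcB
    have hcA0 : 0 ≤ cA := mul_nonneg (Real.rpow_nonneg h2k0.le _) hA
    have hcB0 : 0 ≤ cB := mul_nonneg (Real.rpow_nonneg h2k0.le _) hB
    have hcApow : cA ^ p' = (2 / (k:ℝ)) * A ^ p' := by
      rw [hcA, Real.mul_rpow (Real.rpow_nonneg h2k0.le _) hA,
        ← Real.rpow_mul h2k0.le, one_div, inv_mul_cancel₀ hp'0.ne', Real.rpow_one]
    have hcBpow : cB ^ p = (2 / (k:ℝ)) * B ^ p := by
      rw [hcB, Real.mul_rpow (Real.rpow_nonneg h2k0.le _) hB,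
        ← Real.rpow_mul h2k0.le, one_div, inv_mul_cancel₀ hp0.ne', Real.rpow_one]
    -- cardinality bounds
    have cardbound : ∀ (c : ℝ) (g : ℕ → ℝ) (q G : ℝ), (∀ i, 0 ≤ g i) → 0 < q →
        0 ≤ c → c ^ q = (2 / (k:ℝ)) * G → (∑ i ∈ Finset.Icc 1 k, g i ^ q ≤ G) →
        2 * (((Finset.Icc 1 k).filter (fun i => c < g i)).card : ℝ) < k := by
      intro c g q G hg hq hc hcq hsum
      by_contra hcon
      push_neg at hcon
      set bad := (Finset.Icc 1 k).filter (fun i => c < g i) with hbad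
      have hb0 : bad.card ≠ 0 := by
        intro h0
        rw [h0] at hcon
        push_cast at hcon
        have : (1:ℝ) ≤ (k:ℝ) := by exact_mod_cast hk
        linarith
      have hne : bad.Nonempty := Finset.card_pos.mp (Nat.pos_of_ne_zero hb0)
      have hstrict : (bad.card : ℝ) * c ^ q < ∑ i ∈ bad, g i ^ q := by
        have := Finset.sum_lt_sum_of_nonempty hne
          (f := fun _ => c ^ q) (g := fun i => g i ^ q) ?_
        · simpa [Finset.sum_const, nsmul_eq_mul] using this
        · intro i hi
          rw [hbad, Finset.mem_filter] at hi
          exact Real.rpow_lt_rpow hc hi.2 hq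
      have hsub : ∑ i ∈ bad, g i ^ q ≤ ∑ i ∈ Finset.Icc 1 k, g i ^ q :=
        Finset.sum_le_sum_of_subset_of_nonneg (Finset.filter_subset _ _)
          (fun i _ _ => Real.rpow_nonneg (hg i) q)
      have hG0 : 0 ≤ G := le_trans (Finset.sum_nonneg fun i _ =>
        Real.rpow_nonneg (hg i) q) hsum
      rw [hcq] at hstrict
      -- bad.card * (2/k * G) < G  but  k ≤ 2*card so card*(2/k) ≥ 1
      have : (bad.card : ℝ) * ((2 / (k:ℝ)) * G) < G := lt_of_lt_of_le hstrict (le_trans hsub hsum)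
      have hge : G ≤ (bad.card : ℝ) * ((2 / (k:ℝ)) * G) := by
        have h1 : (1:ℝ) ≤ (bad.card : ℝ) * (2 / (k:ℝ)) := by
          rw [mul_div_assoc', le_div_iff₀ hkR]
          linarith
        calc G = 1 * G := (one_mul G).symm
          _ ≤ ((bad.card : ℝ) * (2 / (k:ℝ))) * G := mul_le_mul_of_nonneg_right h1 hG0
          _ = (bad.card : ℝ) * ((2 / (k:ℝ)) * G) := by ring
      linarith
    set badA := (Finset.Icc 1 k).filter (fun i => cA < a i) with hbadAdef
    set badB := (Finset.Icc 1 k).filter (fun i => cB < b i) with hbadBdef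
    have hbadA := cardbound cA a p' (A ^ p') ha hp'0 hcA0 hcApow hsa
    have hbadB := cardbound cB b p (B ^ p) hb hp0 hcB0 hcBpow hsb
    rw [← hbadAdef] at hbadA
    rw [← hbadBdef] at hbadB
    have hA' : 2 * badA.card < k := by exact_mod_cast hbadA
    have hB' : 2 * badB.card < k := by exact_mod_cast hbadB
    have hcu : (badA ∪ badB).card ≤ badA.card + badB.card := Finset.card_union_le _ _
    have h2 : (Finset.Icc 1 k).card = k := by rw [Nat.card_Icc]; omega
    have hsd : (Finset.Icc 1 k \ (badA ∪ badB)).Nonempty := by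
      rw [← Finset.card_pos, Finset.card_sdiff_of_subset (Finset.union_subset
        (Finset.filter_subset _ _) (Finset.filter_subset _ _)), ← hbadAdef, ← hbadBdef, h2]
      omega
    obtain ⟨i, hi⟩ := hsd
    rw [Finset.mem_sdiff, Finset.mem_union] at hi
    obtain ⟨hiIcc, hinot⟩ := hi
    push_neg at hinot
    have hia : a i ≤ cA := by
      by_contra hcon; push_neg at hcon
      exact hinot.1 (Finset.mem_filter.mpr ⟨hiIcc, hcon⟩)
    have hib : b i ≤ cB := by
      by_contra hcon; push_neg at hcon
      exact hinot.2 (Finset.mem_filter.mpr ⟨hiIcc, hcon⟩)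
    refine ⟨i, hiIcc, ?_⟩
    have step1 : a i * b i ≤ cA * cB := mul_le_mul hia hib (hb i) hcA0
    have step2 : cA * cB = (2 / (k:ℝ)) ^ (1 / p' + 1 / p) * (A * B) := by
      rw [hcA, hcB, Real.rpow_add h2k0]; ring
    have step3 : (2 / (k:ℝ)) ^ (1 / p' + 1 / p) ≤ (2 / (k:ℝ)) ^ μ :=
      Real.rpow_le_rpow_of_exponent_ge h2k0 h2k1 (by linarith)
    have step4 : (2 / (k:ℝ)) ^ μ = 2 ^ μ * (k:ℝ) ^ (-μ) := by
      rw [div_eq_mul_inv, Real.mul_rpow (by norm_num) (by positivity),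
        Real.inv_rpow hkR.le, ← Real.rpow_neg hkR.le]
    calc a i * b i ≤ cA * cB := step1
      _ = (2 / (k:ℝ)) ^ (1 / p' + 1 / p) * (A * B) := step2
      _ ≤ (2 / (k:ℝ)) ^ μ * (A * B) := mul_le_mul_of_nonneg_right step3 (mul_nonneg hA hB)
      _ = 2 ^ μ * (k:ℝ) ^ (-μ) * (A * B) := by rw [step4]

private lemma remove_point (h x : ℝ → ℝ) (m i' : ℕ) (him : i' + 1 ≤ m) (σ : ℕ → ℝ) :
    ∑ j ∈ range (m + 1), (h (σ j) - h (σ 0)) * (x (σ (j + 1)) - x (σ j))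
      = (∑ j ∈ range m,
          (h ((fun j => if j < i' + 1 then σ j else σ (j + 1)) j)
              - h ((fun j => if j < i' + 1 then σ j else σ (j + 1)) 0))
            * (x ((fun j => if j < i' + 1 then σ j else σ (j + 1)) (j + 1))
              - x ((fun j => if j < i' + 1 then σ j else σ (j + 1)) j)))
        + (h (σ (i' + 1)) - h (σ i')) * (x (σ (i' + 1 + 1)) - x (σ (i' + 1))) := by
  set τ : ℕ → ℝ := fun j => if j < i' + 1 then σ j else σ (j + 1) with hτ
  have hτlt : ∀ j, j < i' + 1 → τ j = σ j := fun j hj => if_pos hj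
  have hτge : ∀ j, i' + 1 ≤ j → τ j = σ (j + 1) := fun j hj => if_neg (by omega)
  set F : ℕ → ℝ := fun j => (h (σ j) - h (σ 0)) * (x (σ (j + 1)) - x (σ j)) with hF
  set G : ℕ → ℝ := fun j => (h (τ j) - h (τ 0)) * (x (τ (j + 1)) - x (τ j)) with hG
  have hτ0 : τ 0 = σ 0 := hτlt 0 (by omega)
  have splitF : ∑ j ∈ range (m + 1), F j
      = (∑ j ∈ Ico 0 i', F j) + ((F i' + F (i' + 1)) + ∑ j ∈ Ico (i' + 2) (m + 1), F j) := by
    rw [range_eq_Ico,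
      ← Finset.sum_Ico_consecutive F (Nat.zero_le i') (by omega : i' ≤ m + 1),
      ← Finset.sum_Ico_consecutive F (by omega : i' ≤ i' + 2) (by omega : i' + 2 ≤ m + 1)]
    congr 2
    rw [Finset.sum_Ico_succ_top (by omega : i' ≤ i' + 1), Nat.Ico_succ_singleton,
      Finset.sum_singleton]
  have splitG : ∑ j ∈ range m, G j
      = (∑ j ∈ Ico 0 i', G j) + (G i' + ∑ j ∈ Ico (i' + 1) m, G j) := by
    rw [range_eq_Ico,
      ← Finset.sum_Ico_consecutive G (Nat.zero_le i') (by omega : i' ≤ m),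
      ← Finset.sum_Ico_consecutive G (by omega : i' ≤ i' + 1) (by omega : i' + 1 ≤ m)]
    congr 2
    rw [Nat.Ico_succ_singleton, Finset.sum_singleton]
  have eq1 : ∑ j ∈ Ico 0 i', G j = ∑ j ∈ Ico 0 i', F j := by
    apply Finset.sum_congr rfl
    intro j hj
    rw [Finset.mem_Ico] at hj
    simp only [hG, hF]
    rw [hτlt j (by omega), hτlt (j + 1) (by omega), hτ0]
  have eq2 : ∑ j ∈ Ico (i' + 1) m, G j = ∑ j ∈ Ico (i' + 2) (m + 1), F j := by
    rw [Finset.sum_Ico_eq_sum_range, Finset.sum_Ico_eq_sum_range]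
    apply Finset.sum_congr (by congr 1; omega)
    intro l _
    have e1 : τ (i' + 1 + l) = σ (i' + 2 + l) := by
      rw [hτge _ (by omega)]; congr 1; omega
    have e2 : τ (i' + 1 + l + 1) = σ (i' + 2 + l + 1) := by
      rw [hτge _ (by omega)]; congr 1; omega
    simp only [hG, hF]
    rw [e1, e2, hτ0]
  have eq3 : G i' = F i' + F (i' + 1) - (h (σ (i' + 1)) - h (σ i')) * (x (σ (i' + 1 + 1)) - x (σ (i' + 1))) := by
    simp only [hG, hF]
    rw [hτlt i' (by omega), hτge (i' + 1) le_rfl, hτ0]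
    ring
  rw [splitF, splitG, eq1, eq2, eq3]
  ring

private lemma young_aux (T p p' μ : ℝ) (hp : 1 ≤ p) (hp' : 1 ≤ p')
    (hμ : 1 < μ) (hμ' : μ < 1 / p + 1 / p') (h x : ℝ → ℝ)
    (hh : BddAbove (qVarSums p' h 0 T)) (hx : BddAbove (qVarSums p x 0 T)) :
    ∀ m : ℕ, ∀ σ : ℕ → ℝ, (∀ i, i < m → σ i ≤ σ (i + 1)) → 0 ≤ σ 0 → σ m ≤ T →
      |∑ j ∈ range m, (h (σ j) - h (σ 0)) * (x (σ (j + 1)) - x (σ j))|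
        ≤ (∑ l ∈ range (m - 1), 2 ^ μ * ((l : ℝ) + 1) ^ (-μ))
            * (qVar p' h (σ 0) (σ m) * qVar p x (σ 0) (σ m)) := by
  have hp0 : (0:ℝ) < p := by linarith
  have hp'0 : (0:ℝ) < p' := by linarith
  intro m
  induction m with
  | zero =>
    intro σ _ _ _
    simp
  | succ m ih =>
    intro σ hmono h0 hT'
    rcases Nat.eq_zero_or_pos m with rfl | hm1
    · simp
    -- m ≥ 1; m+1 intervals, interior points 1..m
    have hbh : BddAbove (qVarSums p' h (σ 0) (σ (m + 1))) :=
      bddAbove_qVarSums_sub hp' h0 hT' hh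
    have hbx : BddAbove (qVarSums p x (σ 0) (σ (m + 1))) :=
      bddAbove_qVarSums_sub hp h0 hT' hx
    set V' := qVar p' h (σ 0) (σ (m + 1)) with hV'
    set V := qVar p x (σ 0) (σ (m + 1)) with hV
    have hV'0 : 0 ≤ V' := qVar_nonneg' hmono hbh
    have hV0 : 0 ≤ V := qVar_nonneg' hmono hbx
    have Sh : ∑ j ∈ range (m + 1), |h (σ (j + 1)) - h (σ j)| ^ p' ≤ V' ^ p' :=
      sum_le_qVar_rpow hp'0 hmono hbh
    have Sx : ∑ j ∈ range (m + 1), |x (σ (j + 1)) - x (σ j)| ^ p ≤ V ^ p :=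
      sum_le_qVar_rpow hp0 hmono hbx
    -- pigeonhole data
    have hsa : ∑ i ∈ Finset.Icc 1 m, |h (σ i) - h (σ (i - 1))| ^ p' ≤ V' ^ p' := by
      refine le_trans ?_ Sh
      have : ∑ i ∈ Finset.Icc 1 m, |h (σ i) - h (σ (i - 1))| ^ p'
          = ∑ j ∈ range m, |h (σ (j + 1)) - h (σ j)| ^ p' := by
        rw [← Finset.Ico_add_one_right_eq_Icc, Finset.sum_Ico_eq_sum_range]
        apply Finset.sum_congr rfl
        intro l _
        simp [Nat.add_comm 1 l]
      rw [this]
      exact Finset.sum_le_sum_of_subset_of_nonneg (by intro j hj; rw [mem_range] at *; omega)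
        (fun _ _ _ => Real.rpow_nonneg (abs_nonneg _) _)
    have hsb : ∑ i ∈ Finset.Icc 1 m, |x (σ (i + 1)) - x (σ i)| ^ p ≤ V ^ p := by
      refine le_trans ?_ Sx
      apply Finset.sum_le_sum_of_subset_of_nonneg
      · intro j hj; rw [Finset.mem_Icc] at hj; rw [mem_range]; omega
      · exact fun _ _ _ => Real.rpow_nonneg (abs_nonneg _) _
    obtain ⟨i, hiIcc, hgood⟩ := exists_good_index p p' μ hp hp' hμ hμ' m hm1
      (fun i => |h (σ i) - h (σ (i - 1))|) (fun i => |x (σ (i + 1)) - x (σ i)|)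
      (fun _ => abs_nonneg _) (fun _ => abs_nonneg _) V' V hV'0 hV0 hsa hsb
    rw [Finset.mem_Icc] at hiIcc
    obtain ⟨i', rfl⟩ : ∃ i', i = i' + 1 := ⟨i - 1, by omega⟩
    -- removed-point sequence
    set τ : ℕ → ℝ := fun j => if j < i' + 1 then σ j else σ (j + 1) with hτdef
    have hτ0 : τ 0 = σ 0 := if_pos (by omega)
    have hτm : τ m = σ (m + 1) := if_neg (by omega)
    have hτmono : ∀ j, j < m → τ j ≤ τ (j + 1) := by
      intro j hj
      rcases Nat.lt_or_ge (j + 1) (i' + 1) with hlt | hge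
      · rw [hτdef]; simp only
        rw [if_pos (by omega), if_pos hlt]
        exact hmono j (by omega)
      · rcases Nat.lt_or_ge j (i' + 1) with hlt2 | hge2
        · rw [hτdef]; simp only
          rw [if_pos hlt2, if_neg (by omega)]
          exact le_trans (hmono j (by omega)) (hmono (j + 1) (by omega))
        · rw [hτdef]; simp only
          rw [if_neg (by omega), if_neg (by omega)]
          exact hmono (j + 1) (by omega)
    have ihτ := ih τ hτmono (by rw [hτ0]; exact h0) (by rw [hτm]; exact hT')
    rw [hτ0, hτm] at ihτ
    have hremove := remove_point h x m i' (by omega) σ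
    rw [← hτdef] at hremove
    have habs : |(h (σ (i' + 1)) - h (σ i')) * (x (σ (i' + 1 + 1)) - x (σ (i' + 1)))|
        ≤ 2 ^ μ * ((m : ℝ)) ^ (-μ) * (V' * V) := by
      rw [abs_mul]
      have : |h (σ (i' + 1)) - h (σ (i' + 1 - 1))| * |x (σ (i' + 1 + 1)) - x (σ (i' + 1))|
          ≤ 2 ^ μ * ((m : ℝ)) ^ (-μ) * (V' * V) := hgood
      simpa using this
    -- combine
    have key : |∑ j ∈ range (m + 1), (h (σ j) - h (σ 0)) * (x (σ (j + 1)) - x (σ j))|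
        ≤ (∑ l ∈ range (m - 1), 2 ^ μ * ((l : ℝ) + 1) ^ (-μ)) * (V' * V)
          + 2 ^ μ * ((m : ℝ)) ^ (-μ) * (V' * V) := by
      rw [hremove]
      refine le_trans (abs_add_le _ _) ?_
      rw [← hV', ← hV] at ihτ
      rw [hτ0]
      exact add_le_add ihτ habs
    refine le_trans key ?_
    have hsum : (∑ l ∈ range ((m + 1) - 1), 2 ^ μ * ((l : ℝ) + 1) ^ (-μ))
        = (∑ l ∈ range (m - 1), 2 ^ μ * ((l : ℝ) + 1) ^ (-μ)) + 2 ^ μ * ((m : ℝ)) ^ (-μ) := by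
      have : (m + 1) - 1 = (m - 1) + 1 := by omega
      rw [this, Finset.sum_range_succ]
      congr 2
      have : ((m - 1 : ℕ) : ℝ) = (m : ℝ) - 1 := by
        rw [Nat.cast_sub hm1]; norm_num
      rw [this]; ring_nf
    rw [hsum, add_mul]

/-- **Discrete Young-type estimate.** For `1/p + 1/p' > 1` and `1 < μ < 1/p + 1/p'`, if `h`
has finite `p'`-variation and `x` has finite `p`-variation on `[0, T]`, then for all grid
points `u ≤ v` of the uniform partition `t k = k * (T / n)`,
`|∑_{u ≤ t_k < v} (h(t_k) − h(u)) (x(t_{k+1}) − x(t_k))|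
  ≤ K_μ ‖h‖_{p'-var,[u,v]} ‖x‖_{p-var,[u,v]}` with `K_μ = 2^μ ∑_{l ≥ 1} l^{−μ}`. -/
theorem discrete_young_estimate
    (T : ℝ) (hT : 0 < T) (n : ℕ) (hn : 1 ≤ n)
    (t : ℕ → ℝ) (ht : ∀ k, t k = (k : ℝ) * (T / n))
    (p p' : ℝ) (hp : 1 ≤ p) (hp' : 1 ≤ p') (hpp' : 1 < 1 / p + 1 / p')
    (μ : ℝ) (hμ : 1 < μ) (hμ' : μ < 1 / p + 1 / p')
    (h x : ℝ → ℝ)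
    (hh : BddAbove (qVarSums p' h 0 T))
    (hx : BddAbove (qVarSums p x 0 T)) :
    ∀ a b : ℕ, a ≤ b → b ≤ n →
      |∑ k ∈ Finset.Ico a b, (h (t k) - h (t a)) * (x (t (k + 1)) - x (t k))|
        ≤ ((2 : ℝ) ^ μ * ∑' l : ℕ, ((l : ℝ) + 1) ^ (-μ)) *
            qVar p' h (t a) (t b) * qVar p x (t a) (t b) := by
  intro a b hab hbn
  have hn0 : (0:ℝ) < n := by exact_mod_cast hn
  have hΔ : (0:ℝ) ≤ T / n := le_of_lt (div_pos hT hn0)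
  set σ : ℕ → ℝ := fun k => t (a + k) with hσ
  have hσ0 : σ 0 = t a := by rw [hσ]; simp
  have hσm : σ (b - a) = t b := by rw [hσ]; simp only; congr 1; omega
  have hmono : ∀ i, i < b - a → σ i ≤ σ (i + 1) := by
    intro i _
    rw [hσ]; simp only
    rw [ht (a + i), ht (a + (i + 1))]
    apply mul_le_mul_of_nonneg_right _ hΔ
    exact_mod_cast Nat.le_succ (a + i)
  have h00 : 0 ≤ σ 0 := by rw [hσ0, ht]; positivity
  have hTT : σ (b - a) ≤ T := by
    rw [hσm, ht b]
    calc (b:ℝ) * (T / n) ≤ (n:ℝ) * (T / n) :=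
        mul_le_mul_of_nonneg_right (by exact_mod_cast hbn) hΔ
      _ = T := by field_simp
  have hbh : BddAbove (qVarSums p' h (σ 0) (σ (b - a))) :=
    bddAbove_qVarSums_sub hp' h00 hTT hh
  have hbx : BddAbove (qVarSums p x (σ 0) (σ (b - a))) :=
    bddAbove_qVarSums_sub hp h00 hTT hx
  have hV'0 : 0 ≤ qVar p' h (σ 0) (σ (b - a)) := qVar_nonneg' hmono hbh
  have hV0 : 0 ≤ qVar p x (σ 0) (σ (b - a)) := qVar_nonneg' hmono hbx
  have key := young_aux T p p' μ hp hp' hμ hμ' h x hh hx (b - a) σ hmono h00 hTT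
  rw [hσ0, hσm] at key hV'0 hV0
  have hsum : ∑ k ∈ Finset.Ico a b, (h (t k) - h (t a)) * (x (t (k + 1)) - x (t k))
      = ∑ j ∈ range (b - a), (h (σ j) - h (σ 0)) * (x (σ (j + 1)) - x (σ j)) := by
    rw [Finset.sum_Ico_eq_sum_range]
    rfl
  have hsummable : Summable (fun l : ℕ => ((l : ℝ) + 1) ^ (-μ)) := by
    have s1 : Summable (fun l : ℕ => ((l : ℝ)) ^ (-μ)) :=
      Real.summable_nat_rpow.mpr (by linarith)
    have s2 := (summable_nat_add_iff 1).mpr s1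
    simpa using s2
  have hK : (∑ l ∈ range ((b - a) - 1), 2 ^ μ * ((l : ℝ) + 1) ^ (-μ))
      ≤ (2 : ℝ) ^ μ * ∑' l : ℕ, ((l : ℝ) + 1) ^ (-μ) := by
    rw [← Finset.mul_sum]
    apply mul_le_mul_of_nonneg_left _ (Real.rpow_nonneg (by norm_num) μ)
    exact Summable.sum_le_tsum _ (fun l _ => Real.rpow_nonneg (by positivity) _) hsummable
  calc |∑ k ∈ Finset.Ico a b, (h (t k) - h (t a)) * (x (t (k + 1)) - x (t k))|
      = |∑ j ∈ range (b - a), (h (σ j) - h (σ 0)) * (x (σ (j + 1)) - x (σ j))| := by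
        rw [hsum]
    _ ≤ (∑ l ∈ range ((b - a) - 1), 2 ^ μ * ((l : ℝ) + 1) ^ (-μ))
          * (qVar p' h (t a) (t b) * qVar p x (t a) (t b)) := by
        rw [hσ0]; exact key
    _ ≤ ((2 : ℝ) ^ μ * ∑' l : ℕ, ((l : ℝ) + 1) ^ (-μ))
          * (qVar p' h (t a) (t b) * qVar p x (t a) (t b)) :=
        mul_le_mul_of_nonneg_right hK (mul_nonneg hV'0 hV0)
    _ = ((2 : ℝ) ^ μ * ∑' l : ℕ, ((l : ℝ) + 1) ^ (-μ)) *
          qVar p' h (t a) (t b) * qVar p x (t a) (t b) := by ring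
end

section
/- For every H ∈ (0,1) and all reals s, u, v, t with 0 ≤ s ≤ u ≤ v ≤ t, the rectangular increment of the fractional Brownian covariance is nonnegative: R([u,v],[s,t]) ≥ 0. -/
/-- For every `H ∈ (0,1)` and all `0 ≤ s ≤ u ≤ v ≤ t`, the rectangular increment
`R([u,v],[s,t]) = R(v,t) − R(v,s) − R(u,t) + R(u,s)` of the fractional Brownian covariance
`R(s,t) = ½(s^{2H} + t^{2H} − |t − s|^{2H})` is nonnegative. -/
theorem fbm_rectangular_increment_nonneg
    (H : ℝ) (hH0 : 0 < H) (hH1 : H < 1)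
    (R : ℝ → ℝ → ℝ)
    (hR : ∀ a b : ℝ, 0 ≤ a → 0 ≤ b →
      R a b = (a ^ (2 * H) + b ^ (2 * H) - |b - a| ^ (2 * H)) / 2)
    (s u v t : ℝ) (hs : 0 ≤ s) (hsu : s ≤ u) (huv : u ≤ v) (hvt : v ≤ t) :
    0 ≤ R v t - R v s - R u t + R u s := by
  have hu : 0 ≤ u := hs.trans hsu
  have hv : 0 ≤ v := hu.trans huv
  have ht : 0 ≤ t := hv.trans hvt
  rw [hR v t hv ht, hR v s hv hs, hR u t hu ht, hR u s hu hs,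
    abs_of_nonneg (by linarith : (0:ℝ) ≤ t - v),
    abs_of_nonpos (by linarith : s - v ≤ 0),
    abs_of_nonneg (by linarith : (0:ℝ) ≤ t - u),
    abs_of_nonpos (by linarith : s - u ≤ 0)]
  have h1 : (u - s) ^ (2 * H) ≤ (v - s) ^ (2 * H) :=
    Real.rpow_le_rpow (by linarith) (by linarith) (by positivity)
  have h2 : (t - v) ^ (2 * H) ≤ (t - u) ^ (2 * H) :=
    Real.rpow_le_rpow (by linarith) (by linarith) (by positivity)
  have e1 : -(s - v) = v - s := by ring
  have e2 : -(s - u) = u - s := by ring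
  rw [e1, e2]
  linarith
end

section
/- For every H ∈ (0,1/2] and all reals s, u, v, t with 0 ≤ s ≤ u ≤ v ≤ t, one has the two-sided bound −(v − u)^{2H} ≤ R([u,v],[s,u]) + R([u,v],[v,t]) ≤ 0; equivalently, |R([u,v],[s,u]) + R([u,v],[v,t])| ≤ (v − u)^{2H}. -/
lemma fbm_aux_subadd (p a b : ℝ) (ha : 0 ≤ a) (hb : 0 ≤ b) (hp : 0 ≤ p) (hp1 : p ≤ 1) :
    (a + b) ^ p ≤ a ^ p + b ^ p := by
  lift a to NNReal using ha
  lift b to NNReal using hb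
  rw [← NNReal.coe_add, ← NNReal.coe_rpow, ← NNReal.coe_rpow, ← NNReal.coe_rpow,
    ← NNReal.coe_add, NNReal.coe_le_coe]
  exact NNReal.rpow_add_le_add_rpow a b hp hp1

/-- For every `H ∈ (0,1/2]` and all `0 ≤ s ≤ u ≤ v ≤ t`, one has the two-sided bound
`−(v − u)^{2H} ≤ R([u,v],[s,u]) + R([u,v],[v,t]) ≤ 0`, where
`R([a,b],[c,d]) = R(b,d) − R(b,c) − R(a,d) + R(a,c)` and
`R(s,t) = ½(s^{2H} + t^{2H} − |t − s|^{2H})`; equivalently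
`|R([u,v],[s,u]) + R([u,v],[v,t])| ≤ (v − u)^{2H}`. -/
theorem fbm_complement_increment_bound
    (H : ℝ) (hH0 : 0 < H) (hH1 : H ≤ 1 / 2)
    (R : ℝ → ℝ → ℝ)
    (hR : ∀ a b : ℝ, 0 ≤ a → 0 ≤ b →
      R a b = (a ^ (2 * H) + b ^ (2 * H) - |b - a| ^ (2 * H)) / 2)
    (s u v t : ℝ) (hs : 0 ≤ s) (hsu : s ≤ u) (huv : u ≤ v) (hvt : v ≤ t) :
    (-(v - u) ^ (2 * H)
        ≤ (R v u - R v s - R u u + R u s) + (R v t - R v v - R u t + R u v)) ∧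
    ((R v u - R v s - R u u + R u s) + (R v t - R v v - R u t + R u v) ≤ 0) ∧
    (|(R v u - R v s - R u u + R u s) + (R v t - R v v - R u t + R u v)|
        ≤ (v - u) ^ (2 * H)) := by
  have hu : 0 ≤ u := hs.trans hsu
  have hv : 0 ≤ v := hu.trans huv
  have ht : 0 ≤ t := hv.trans hvt
  have hα0 : (0:ℝ) ≤ 2 * H := by linarith
  have hα1 : 2 * H ≤ 1 := by linarith
  rw [hR v u hv hu, hR v s hv hs, hR u u hu hu, hR u s hu hs, hR v t hv ht,
    hR v v hv hv, hR u t hu ht, hR u v hu hv]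
  rw [show |u - v| = v - u by rw [abs_sub_comm]; exact abs_of_nonneg (by linarith),
    show |s - v| = v - s by rw [abs_sub_comm]; exact abs_of_nonneg (by linarith),
    show |u - u| = (0:ℝ) by simp,
    show |s - u| = u - s by rw [abs_sub_comm]; exact abs_of_nonneg (by linarith),
    show |t - v| = t - v from abs_of_nonneg (by linarith),
    show |v - v| = (0:ℝ) by simp,
    show |t - u| = t - u from abs_of_nonneg (by linarith),
    show |v - u| = v - u from abs_of_nonneg (by linarith)]
  have h0 : (0:ℝ) ^ (2 * H) = 0 := Real.zero_rpow (by positivity)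
  rw [h0]
  -- key inequalities
  have h1 : (u - s) ^ (2*H) ≤ (v - s) ^ (2*H) :=
    Real.rpow_le_rpow (by linarith) (by linarith) hα0
  have h2 : (v - s) ^ (2*H) ≤ (u - s) ^ (2*H) + (v - u) ^ (2*H) := by
    have := fbm_aux_subadd (2*H) (u - s) (v - u) (by linarith) (by linarith) hα0 hα1
    rwa [show u - s + (v - u) = v - s by ring] at this
  have h3 : (t - v) ^ (2*H) ≤ (t - u) ^ (2*H) :=
    Real.rpow_le_rpow (by linarith) (by linarith) hα0
  have h4 : (t - u) ^ (2*H) ≤ (t - v) ^ (2*H) + (v - u) ^ (2*H) := by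
    have := fbm_aux_subadd (2*H) (t - v) (v - u) (by linarith) (by linarith) hα0 hα1
    rwa [show t - v + (v - u) = t - u by ring] at this
  refine ⟨by linarith, by linarith, ?_⟩
  rw [abs_le]
  constructor <;> linarith
end

section
/- Let H ∈ (0,1/2], T > 0, and 0 ≤ u < v ≤ T. Then the total variation of the density ρ_{uv} over [0,T] is bounded as ∫_0^T |ρ_{uv}(η)| dη ≤ 2 (v − u)^{2H}. -/
open MeasureTheory Set intervalIntegral
open scoped Interval

private lemma fbm_ii_left (H c a b : ℝ) (hH : 0 < H) :
    IntervalIntegrable (fun η => H * (c - η) ^ (2 * H - 1)) volume a b := by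
  have h := (intervalIntegrable_rpow' (a := c - a) (b := c - b) (r := 2 * H - 1)
      (by linarith)).comp_sub_left c
  simp only [sub_sub_cancel] at h
  exact h.const_mul H

private lemma fbm_ii_right (H c a b : ℝ) (hH : 0 < H) :
    IntervalIntegrable (fun η => H * (η - c) ^ (2 * H - 1)) volume a b := by
  have h := (intervalIntegrable_rpow' (a := a - c) (b := b - c) (r := 2 * H - 1)
      (by linarith)).comp_sub_right c
  simp only [sub_add_cancel] at h
  exact h.const_mul H

private lemma fbm_int_left (H c a b : ℝ) (hH : 0 < H) :
    ∫ η in a..b, H * (c - η) ^ (2 * H - 1)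
      = ((c - a) ^ (2 * H) - (c - b) ^ (2 * H)) / 2 := by
  have h1 : (∫ η in a..b, H * (c - η) ^ (2 * H - 1))
      = ∫ x in (c - b)..(c - a), H * x ^ (2 * H - 1) :=
    intervalIntegral.integral_comp_sub_left (fun x => H * x ^ (2 * H - 1)) c
  have h2 : 2 * H - 1 + 1 = 2 * H := by ring
  have h3 : (2 * H) ≠ 0 := by positivity
  rw [h1, intervalIntegral.integral_const_mul, integral_rpow (Or.inl (by linarith)), h2]
  field_simp

private lemma fbm_int_right (H c a b : ℝ) (hH : 0 < H) :
    ∫ η in a..b, H * (η - c) ^ (2 * H - 1)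
      = ((b - c) ^ (2 * H) - (a - c) ^ (2 * H)) / 2 := by
  have h1 : (∫ η in a..b, H * (η - c) ^ (2 * H - 1))
      = ∫ x in (a - c)..(b - c), H * x ^ (2 * H - 1) :=
    intervalIntegral.integral_comp_sub_right (fun x => H * x ^ (2 * H - 1)) c
  have h2 : 2 * H - 1 + 1 = 2 * H := by ring
  have h3 : (2 * H) ≠ 0 := by positivity
  rw [h1, intervalIntegral.integral_const_mul, integral_rpow (Or.inl (by linarith)), h2]
  field_simp

/-- For `H ∈ (0,1/2]`, `T > 0` and `0 ≤ u < v ≤ T`, the density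
`ρ_{uv}(η) = H (sgn(v − η)|v − η|^{2H−1} − sgn(u − η)|u − η|^{2H−1})` (set to `0` at
`η ∈ {u, v}`) satisfies `∫_0^T |ρ_{uv}(η)| dη ≤ 2 (v − u)^{2H}`. -/
theorem fbm_density_total_variation_bound
    (H : ℝ) (hH0 : 0 < H) (hH1 : H ≤ 1 / 2)
    (T : ℝ) (hT : 0 < T)
    (u v : ℝ) (hu : 0 ≤ u) (huv : u < v) (hv : v ≤ T)
    (ρ : ℝ → ℝ)
    (hρ : ∀ η : ℝ, 0 ≤ η → η ≠ u → η ≠ v →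
      ρ η = H * (Real.sign (v - η) * |v - η| ^ (2 * H - 1)
        - Real.sign (u - η) * |u - η| ^ (2 * H - 1)))
    (hρu : ρ u = 0) (hρv : ρ v = 0) :
    ∫ η in (0 : ℝ)..T, |ρ η| ≤ 2 * (v - u) ^ (2 * H) := by
  have haeu : ∀ᵐ η : ℝ, η ≠ u := by
    have h := measure_eq_zero_iff_ae_notMem.mp (measure_singleton (u : ℝ) (μ := volume))
    filter_upwards [h] with η hη
    simpa using hη
  have haev : ∀ᵐ η : ℝ, η ≠ v := by
    have h := measure_eq_zero_iff_ae_notMem.mp (measure_singleton (v : ℝ) (μ := volume))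
    filter_upwards [h] with η hη
    simpa using hη
  -- piece functions
  set g1 : ℝ → ℝ := fun η => H * (u - η) ^ (2 * H - 1) - H * (v - η) ^ (2 * H - 1) with hg1
  set g2 : ℝ → ℝ := fun η => H * (v - η) ^ (2 * H - 1) + H * (η - u) ^ (2 * H - 1) with hg2
  set g3 : ℝ → ℝ := fun η => H * (η - v) ^ (2 * H - 1) - H * (η - u) ^ (2 * H - 1) with hg3
  have hii1 : IntervalIntegrable g1 volume 0 u :=
    (fbm_ii_left H u 0 u hH0).sub (fbm_ii_left H v 0 u hH0)
  have hii2 : IntervalIntegrable g2 volume u v :=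
    (fbm_ii_left H v u v hH0).add (fbm_ii_right H u u v hH0)
  have hii3 : IntervalIntegrable g3 volume v T :=
    (fbm_ii_right H v v T hH0).sub (fbm_ii_right H u v T hH0)
  -- a.e. identification on the three pieces
  have hc1 : ∀ᵐ η : ℝ, η ∈ Ι (0 : ℝ) u → |ρ η| = g1 η := by
    filter_upwards [haeu, haev] with η hηu hηv hmem
    rw [uIoc_of_le hu] at hmem
    obtain ⟨h0, h1⟩ := hmem
    have hη : 0 ≤ η := h0.le
    have hηu' : η < u := lt_of_le_of_ne h1 hηu
    have hρη := hρ η hη hηu hηv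
    rw [Real.sign_of_pos (show (0:ℝ) < v - η by linarith),
      Real.sign_of_pos (show (0:ℝ) < u - η by linarith),
      abs_of_pos (show (0:ℝ) < v - η by linarith),
      abs_of_pos (show (0:ℝ) < u - η by linarith), one_mul, one_mul] at hρη
    have hle : (v - η) ^ (2 * H - 1) ≤ (u - η) ^ (2 * H - 1) :=
      Real.rpow_le_rpow_of_nonpos (by linarith) (by linarith) (by linarith)
    have hneg : ρ η ≤ 0 := by
      rw [hρη]; nlinarith
    rw [abs_of_nonpos hneg, hρη, hg1]; ring
  have hc2 : ∀ᵐ η : ℝ, η ∈ Ι u v → |ρ η| = g2 η := by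
    filter_upwards [haeu, haev] with η hηu hηv hmem
    rw [uIoc_of_le huv.le] at hmem
    obtain ⟨h0, h1⟩ := hmem
    have hη : 0 ≤ η := le_trans hu h0.le
    have hηv' : η < v := lt_of_le_of_ne h1 hηv
    have hρη := hρ η hη hηu hηv
    rw [Real.sign_of_pos (show (0:ℝ) < v - η by linarith),
      Real.sign_of_neg (show u - η < 0 by linarith),
      abs_of_pos (show (0:ℝ) < v - η by linarith),
      abs_of_neg (show u - η < 0 by linarith), one_mul] at hρη
    have h2 : -(u - η) = η - u := by ring
    rw [h2] at hρη
    have ha : (0:ℝ) ≤ (v - η) ^ (2 * H - 1) := Real.rpow_nonneg (by linarith) _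
    have hb : (0:ℝ) ≤ (η - u) ^ (2 * H - 1) := Real.rpow_nonneg (by linarith) _
    have hpos : 0 ≤ ρ η := by rw [hρη]; nlinarith
    rw [abs_of_nonneg hpos, hρη, hg2]; ring
  have hc3 : ∀ᵐ η : ℝ, η ∈ Ι v T → |ρ η| = g3 η := by
    filter_upwards [haeu, haev] with η hηu hηv hmem
    rw [uIoc_of_le hv] at hmem
    obtain ⟨h0, h1⟩ := hmem
    have hη : 0 ≤ η := by linarith [le_trans hu huv.le]
    have hρη := hρ η hη hηu hηv
    rw [Real.sign_of_neg (show v - η < 0 by linarith),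
      Real.sign_of_neg (show u - η < 0 by linarith),
      abs_of_neg (show v - η < 0 by linarith),
      abs_of_neg (show u - η < 0 by linarith)] at hρη
    have h2 : -(u - η) = η - u := by ring
    have h3 : -(v - η) = η - v := by ring
    rw [h2, h3] at hρη
    have hle : (η - u) ^ (2 * H - 1) ≤ (η - v) ^ (2 * H - 1) :=
      Real.rpow_le_rpow_of_nonpos (by linarith) (by linarith) (by linarith)
    have hneg : ρ η ≤ 0 := by rw [hρη]; nlinarith
    rw [abs_of_nonpos hneg, hρη, hg3]; ring
  -- integrability of |ρ| on the three pieces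
  have hr1 : IntervalIntegrable (fun η => |ρ η|) volume 0 u := by
    refine hii1.congr_ae ((ae_restrict_iff' measurableSet_uIoc).mpr ?_)
    filter_upwards [hc1] with η h hm
    exact (h hm).symm
  have hr2 : IntervalIntegrable (fun η => |ρ η|) volume u v := by
    refine hii2.congr_ae ((ae_restrict_iff' measurableSet_uIoc).mpr ?_)
    filter_upwards [hc2] with η h hm
    exact (h hm).symm
  have hr3 : IntervalIntegrable (fun η => |ρ η|) volume v T := by
    refine hii3.congr_ae ((ae_restrict_iff' measurableSet_uIoc).mpr ?_)
    filter_upwards [hc3] with η h hm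
    exact (h hm).symm
  -- split the integral
  have hsplit : (∫ η in (0:ℝ)..T, |ρ η|)
      = (∫ η in (0:ℝ)..u, |ρ η|) + (∫ η in u..v, |ρ η|) + (∫ η in v..T, |ρ η|) := by
    rw [← integral_add_adjacent_intervals (hr1.trans hr2) hr3,
      ← integral_add_adjacent_intervals hr1 hr2]
  have hz : (0:ℝ) ^ (2 * H) = 0 := Real.zero_rpow (by positivity)
  -- compute each piece
  have hP1 : (∫ η in (0:ℝ)..u, |ρ η|)
      = (u ^ (2 * H) - (v ^ (2 * H) - (v - u) ^ (2 * H))) / 2 := by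
    rw [integral_congr_ae hc1]
    have := (fbm_ii_left H u 0 u hH0).sub (fbm_ii_left H v 0 u hH0)
    rw [intervalIntegral.integral_sub (fbm_ii_left H u 0 u hH0) (fbm_ii_left H v 0 u hH0),
      fbm_int_left H u 0 u hH0, fbm_int_left H v 0 u hH0]
    rw [sub_zero, sub_self, sub_zero, hz]
    ring
  have hP2 : (∫ η in u..v, |ρ η|) = (v - u) ^ (2 * H) := by
    rw [integral_congr_ae hc2,
      intervalIntegral.integral_add (fbm_ii_left H v u v hH0) (fbm_ii_right H u u v hH0),
      fbm_int_left H v u v hH0, fbm_int_right H u u v hH0]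
    rw [sub_self, sub_self, hz]
    ring
  have hP3 : (∫ η in v..T, |ρ η|)
      = ((T - v) ^ (2 * H) - ((T - u) ^ (2 * H) - (v - u) ^ (2 * H))) / 2 := by
    rw [integral_congr_ae hc3,
      intervalIntegral.integral_sub (fbm_ii_right H v v T hH0) (fbm_ii_right H u v T hH0),
      fbm_int_right H v v T hH0, fbm_int_right H u v T hH0]
    rw [sub_self, hz]
    ring
  have hb1 : u ^ (2 * H) ≤ v ^ (2 * H) :=
    Real.rpow_le_rpow hu huv.le (by positivity)
  have hb3 : (T - v) ^ (2 * H) ≤ (T - u) ^ (2 * H) :=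
    Real.rpow_le_rpow (by linarith) (by linarith) (by positivity)
  rw [hsplit, hP1, hP2, hP3]
  linarith
end

section
/- Let H ∈ (0,1/2], T > 0, and let φ : [0,T] → ℝ be bounded and measurable. Then for all 0 ≤ s < t ≤ T, |∫_0^T φ(η) ρ_{st}(η) dη| ≤ 2 (t − s)^{2H} · sup_{η ∈ [0,T]} |φ(η)|. -/
open MeasureTheory intervalIntegral Set

lemma measurable_abs_rpow (r : ℝ) : Measurable fun x : ℝ => |x| ^ r := by
  have h : (fun x : ℝ => |x| ^ r)
      = fun x => if x = 0 then (0:ℝ) ^ r else Real.exp (Real.log |x| * r) := by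
    funext x
    by_cases hx : x = 0
    · simp [hx]
    · rw [if_neg hx, Real.rpow_def_of_pos (abs_pos.mpr hx)]
  rw [h]
  exact Measurable.ite (measurableSet_singleton 0) measurable_const
    (Real.measurable_exp.comp ((Real.measurable_log.comp measurable_abs).mul_const r))

lemma measurable_realSign : Measurable Real.sign := by
  have h : Real.sign = fun r : ℝ => if r < 0 then (-1:ℝ) else if 0 < r then 1 else 0 := rfl
  rw [h]
  exact Measurable.ite measurableSet_Iio measurable_const
    (Measurable.ite measurableSet_Ioi measurable_const measurable_const)

lemma myHasDerivAt_abs_rpow {p : ℝ} {x : ℝ} (hx : x ≠ 0) :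
    HasDerivAt (fun y : ℝ => |y| ^ p) (Real.sign x * p * |x| ^ (p - 1)) x := by
  rcases hx.lt_or_gt with h | h
  · have h1 : HasDerivAt (fun y : ℝ => (-y) ^ p) (p * (-x) ^ (p - 1) * (-1)) x :=
      (Real.hasDerivAt_rpow_const (Or.inl (by linarith : (-x) ≠ 0))).comp x (hasDerivAt_neg x)
    have h2 : (fun y : ℝ => |y| ^ p) =ᶠ[nhds x] fun y => (-y) ^ p := by
      filter_upwards [Iio_mem_nhds h] with y hy
      rw [abs_of_neg hy]
    have := h1.congr_of_eventuallyEq h2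
    refine this.congr_deriv ?_
    rw [Real.sign_of_neg h, abs_of_neg h]; ring
  · have h1 := Real.hasDerivAt_rpow_const (x := x) (p := p) (Or.inl h.ne')
    have h2 : (fun y : ℝ => |y| ^ p) =ᶠ[nhds x] fun y => y ^ p := by
      filter_upwards [Ioi_mem_nhds h] with y hy
      rw [abs_of_pos hy]
    have := h1.congr_of_eventuallyEq h2
    refine this.congr_deriv ?_
    rw [Real.sign_of_pos h, abs_of_pos h]; ring

lemma intervalIntegrable_abs_rpow {r : ℝ} (h : -1 < r) (a b : ℝ) :
    IntervalIntegrable (fun x : ℝ => |x| ^ r) volume a b := by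
  have H : ∀ c : ℝ, 0 ≤ c → IntervalIntegrable (fun x : ℝ => |x| ^ r) volume 0 c := by
    intro c hc
    have h0 := intervalIntegrable_rpow' (a := 0) (b := c) h
    rw [intervalIntegrable_iff, uIoc_of_le hc] at h0 ⊢
    refine h0.congr_fun ?_ measurableSet_Ioc
    intro x hx
    show x ^ r = |x| ^ r
    rw [abs_of_pos hx.1]
  have H' : ∀ c : ℝ, IntervalIntegrable (fun x : ℝ => |x| ^ r) volume 0 c := by
    intro c
    rcases le_total 0 c with hc | hc
    · exact H c hc
    · rw [IntervalIntegrable.iff_comp_neg]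
      simp only [abs_neg, neg_zero]
      exact H (-c) (by linarith)
  exact (H' a).symm.trans (H' b)

/-- For `H ∈ (0,1/2]`, `T > 0`, a bounded measurable `φ : [0,T] → ℝ` and `0 ≤ s < t ≤ T`,
`|∫_0^T φ(η) ρ_{st}(η) dη| ≤ 2 (t − s)^{2H} sup_{η ∈ [0,T]} |φ(η)|`, where
`ρ_{st}(η) = H (sgn(t − η)|t − η|^{2H−1} − sgn(s − η)|s − η|^{2H−1})` (set to `0` at
`η ∈ {s, t}`). -/
theorem fbm_density_pairing_bound
    (H : ℝ) (hH0 : 0 < H) (hH1 : H ≤ 1 / 2)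
    (T : ℝ) (hT : 0 < T)
    (φ : ℝ → ℝ) (hφm : Measurable φ)
    (hφb : ∃ M : ℝ, ∀ η ∈ Set.Icc (0 : ℝ) T, |φ η| ≤ M)
    (s t : ℝ) (hs : 0 ≤ s) (hst : s < t) (ht : t ≤ T)
    (ρ : ℝ → ℝ)
    (hρ : ∀ η : ℝ, 0 ≤ η → η ≠ s → η ≠ t →
      ρ η = H * (Real.sign (t - η) * |t - η| ^ (2 * H - 1)
        - Real.sign (s - η) * |s - η| ^ (2 * H - 1)))
    (hρs : ρ s = 0) (hρt : ρ t = 0) :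
    |∫ η in (0 : ℝ)..T, φ η * ρ η|
      ≤ 2 * (t - s) ^ (2 * H) * sSup ((fun η => |φ η|) '' Set.Icc (0 : ℝ) T) := by
  obtain ⟨M₀, hM₀⟩ := hφb
  have h0T : (0:ℝ) ≤ T := hT.le
  have hr : (-1:ℝ) < 2 * H - 1 := by linarith
  have hr0 : 2 * H - 1 ≤ 0 := by linarith
  have h2H : (0:ℝ) < 2 * H := by linarith
  set ψ : ℝ → ℝ := fun η => H * (Real.sign (t - η) * |t - η| ^ (2 * H - 1)
      - Real.sign (s - η) * |s - η| ^ (2 * H - 1)) with hψdef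
  set f : ℝ → ℝ := fun η => (|s - η| ^ (2*H) - |t - η| ^ (2*H)) / 2 with hfdef
  -- measurability of ψ
  have hψm : Measurable ψ := by
    apply Measurable.const_mul
    exact ((measurable_realSign.comp (measurable_const.sub measurable_id)).mul
        ((measurable_abs_rpow (2*H-1)).comp (measurable_const.sub measurable_id))).sub
      ((measurable_realSign.comp (measurable_const.sub measurable_id)).mul
        ((measurable_abs_rpow (2*H-1)).comp (measurable_const.sub measurable_id)))
  -- |sign|
  have hsle : ∀ z : ℝ, |Real.sign z| ≤ 1 := by
    intro z; rcases Real.sign_apply_eq z with h|h|h <;> simp [h]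
  have hkey : ∀ z : ℝ, |Real.sign z * |z| ^ (2*H-1)| ≤ |z| ^ (2*H-1) := by
    intro z
    rw [abs_mul, abs_of_nonneg (Real.rpow_nonneg (abs_nonneg z) _)]
    exact mul_le_of_le_one_left (Real.rpow_nonneg (abs_nonneg z) _) (hsle z)
  -- integrability of ψ on any interval
  have hInt : ∀ a b : ℝ, IntervalIntegrable ψ volume a b := by
    intro a b
    have h1 : IntervalIntegrable (fun η : ℝ => |t - η| ^ (2*H-1)) volume a b := by
      have := (intervalIntegrable_abs_rpow hr (t - a) (t - b)).comp_sub_left t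
      simpa using this
    have h2 : IntervalIntegrable (fun η : ℝ => |s - η| ^ (2*H-1)) volume a b := by
      have := (intervalIntegrable_abs_rpow hr (s - a) (s - b)).comp_sub_left s
      simpa using this
    refine IntervalIntegrable.mono_fun' ((h1.add h2).const_mul H)
      hψm.aestronglyMeasurable.restrict (Filter.Eventually.of_forall ?_)
    intro η
    simp only [Real.norm_eq_abs, hψdef]
    rw [abs_mul, abs_of_pos hH0]
    have := abs_sub (Real.sign (t - η) * |t - η| ^ (2*H-1))
      (Real.sign (s - η) * |s - η| ^ (2*H-1))
    have hb := add_le_add (hkey (t - η)) (hkey (s - η))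
    nlinarith [hH0.le, abs_sub_abs_le_abs_sub (Real.sign (t - η) * |t - η| ^ (2*H-1)) 0]
  -- continuity of f
  have hfc : Continuous f := by
    apply Continuous.div_const
    exact (((continuous_const.sub continuous_id).abs).rpow_const (fun x => Or.inr h2H.le)).sub
      (((continuous_const.sub continuous_id).abs).rpow_const (fun x => Or.inr h2H.le))
  -- derivative of f
  have hfd : ∀ η : ℝ, η ≠ s → η ≠ t → HasDerivAt f (ψ η) η := by
    intro η hηs hηt
    have d1 : HasDerivAt (fun y : ℝ => |s - y| ^ (2*H))
        ((Real.sign (s - η) * (2*H) * |s - η| ^ (2*H - 1)) * (-1)) η := by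
      have hne : s - η ≠ 0 := sub_ne_zero.mpr (Ne.symm hηs)
      exact (myHasDerivAt_abs_rpow hne).comp η ((hasDerivAt_id η).const_sub s)
    have d2 : HasDerivAt (fun y : ℝ => |t - y| ^ (2*H))
        ((Real.sign (t - η) * (2*H) * |t - η| ^ (2*H - 1)) * (-1)) η := by
      have hne : t - η ≠ 0 := sub_ne_zero.mpr (Ne.symm hηt)
      exact (myHasDerivAt_abs_rpow hne).comp η ((hasDerivAt_id η).const_sub t)
    have := (d1.sub d2).div_const 2
    refine this.congr_deriv ?_
    simp only [hψdef]; ring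
  -- FTC pieces
  have I1 : ∫ η in (0:ℝ)..s, ψ η = f s - f 0 := by
    refine integral_eq_sub_of_hasDerivAt_of_le hs hfc.continuousOn ?_ (hInt 0 s)
    intro η hη
    exact hfd η (ne_of_lt hη.2) (ne_of_lt (hη.2.trans hst))
  have I2 : ∫ η in s..t, ψ η = f t - f s := by
    refine integral_eq_sub_of_hasDerivAt_of_le hst.le hfc.continuousOn ?_ (hInt s t)
    intro η hη
    exact hfd η (ne_of_gt hη.1) (ne_of_lt hη.2)
  have I3 : ∫ η in t..T, ψ η = f T - f t := by
    refine integral_eq_sub_of_hasDerivAt_of_le ht hfc.continuousOn ?_ (hInt t T)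
    intro η hη
    exact hfd η (ne_of_gt (hst.trans hη.1)) (ne_of_gt hη.1)
  -- signs
  have S1 : ∀ η ∈ Ioo (0:ℝ) s, ψ η ≤ 0 := by
    intro η hη
    have h1 : 0 < s - η := by linarith [hη.2]
    have h2 : 0 < t - η := by linarith [hη.2]
    have hle : |t - η| ^ (2*H-1) ≤ |s - η| ^ (2*H-1) := by
      rw [abs_of_pos h1, abs_of_pos h2]
      exact Real.rpow_le_rpow_of_nonpos h1 (by linarith) hr0
    simp only [hψdef, Real.sign_of_pos h1, Real.sign_of_pos h2, one_mul]
    nlinarith [hH0.le]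
  have S2 : ∀ η ∈ Ioo s t, 0 ≤ ψ η := by
    intro η hη
    have h1 : s - η < 0 := by linarith [hη.1]
    have h2 : 0 < t - η := by linarith [hη.2]
    simp only [hψdef, Real.sign_of_neg h1, Real.sign_of_pos h2, one_mul, neg_one_mul,
      sub_neg_eq_add]
    have := Real.rpow_nonneg (abs_nonneg (t - η)) (2*H-1)
    have := Real.rpow_nonneg (abs_nonneg (s - η)) (2*H-1)
    nlinarith [hH0.le]
  have S3 : ∀ η : ℝ, t < η → ψ η ≤ 0 := by
    intro η hη
    have h1 : s - η < 0 := by linarith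
    have h2 : t - η < 0 := by linarith
    have hle : |s - η| ^ (2*H-1) ≤ |t - η| ^ (2*H-1) := by
      rw [abs_of_neg h1, abs_of_neg h2]
      exact Real.rpow_le_rpow_of_nonpos (by linarith) (by linarith) hr0
    simp only [hψdef, Real.sign_of_neg h1, Real.sign_of_neg h2, neg_one_mul, sub_neg_eq_add]
    nlinarith [hH0.le]
  -- a.e. avoidance of s, t
  have haes : ∀ᵐ η : ℝ, η ≠ s := by
    have h : {η : ℝ | ¬ η ≠ s} = {s} := by ext x; simp
    rw [ae_iff, h]; exact measure_singleton s
  have haet : ∀ᵐ η : ℝ, η ≠ t := by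
    have h : {η : ℝ | ¬ η ≠ t} = {t} := by ext x; simp
    rw [ae_iff, h]; exact measure_singleton t
  -- abs integrals on pieces
  have A1 : ∫ η in (0:ℝ)..s, |ψ η| = -(∫ η in (0:ℝ)..s, ψ η) := by
    rw [← intervalIntegral.integral_neg]
    apply intervalIntegral.integral_congr_ae
    filter_upwards [haes] with η hηs hη
    rw [uIoc_of_le hs] at hη
    exact abs_of_nonpos (S1 η ⟨hη.1, lt_of_le_of_ne hη.2 hηs⟩)
  have A2 : ∫ η in s..t, |ψ η| = ∫ η in s..t, ψ η := by
    apply intervalIntegral.integral_congr_ae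
    filter_upwards [haet] with η hηt hη
    rw [uIoc_of_le hst.le] at hη
    exact abs_of_nonneg (S2 η ⟨hη.1, lt_of_le_of_ne hη.2 hηt⟩)
  have A3 : ∫ η in t..T, |ψ η| = -(∫ η in t..T, ψ η) := by
    rw [← intervalIntegral.integral_neg]
    apply intervalIntegral.integral_congr_ae
    refine Filter.Eventually.of_forall fun η hη => ?_
    rw [uIoc_of_le ht] at hη
    exact abs_of_nonpos (S3 η hη.1)
  -- splitting
  have e1 : (∫ η in (0:ℝ)..s, |ψ η|) + (∫ η in s..t, |ψ η|) = ∫ η in (0:ℝ)..t, |ψ η| :=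
    integral_add_adjacent_intervals (hInt 0 s).abs (hInt s t).abs
  have e2 : (∫ η in (0:ℝ)..t, |ψ η|) + (∫ η in t..T, |ψ η|) = ∫ η in (0:ℝ)..T, |ψ η| :=
    integral_add_adjacent_intervals (hInt 0 t).abs (hInt t T).abs
  -- values of f
  have hf0 : f 0 ≤ 0 := by
    have h1 : |s - 0| ^ (2*H) ≤ |t - 0| ^ (2*H) := by
      rw [sub_zero, sub_zero, abs_of_nonneg hs, abs_of_pos (hs.trans_lt hst)]
      exact Real.rpow_le_rpow hs hst.le h2H.le
    simp only [hfdef]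
    linarith
  have hfT : 0 ≤ f T := by
    have h1 : |t - T| ^ (2*H) ≤ |s - T| ^ (2*H) := by
      rw [abs_of_nonpos (by linarith), abs_of_nonpos (by linarith)]
      exact Real.rpow_le_rpow (by linarith) (by linarith) h2H.le
    simp only [hfdef]
    linarith
  have hfts : f t - f s = (t - s) ^ (2*H) := by
    have h1 : |s - t| = t - s := by rw [abs_of_neg (by linarith)]; ring
    have h2 : |t - s| = t - s := abs_of_pos (by linarith)
    simp only [hfdef, sub_self, abs_zero, h1, h2, Real.zero_rpow h2H.ne']
    ring
  -- total bound on ∫ |ψ|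
  have htot : ∫ η in (0:ℝ)..T, |ψ η| ≤ 2 * (t - s) ^ (2*H) := by
    rw [← e2, ← e1, A1, A2, A3, I1, I2, I3]
    linarith
  -- sup facts
  set M := sSup ((fun η => |φ η|) '' Set.Icc (0:ℝ) T) with hMdef
  have hbdd : BddAbove ((fun η => |φ η|) '' Set.Icc (0:ℝ) T) := by
    refine ⟨M₀, ?_⟩
    rintro x ⟨η, hη, rfl⟩
    exact hM₀ η hη
  have hMle : ∀ η ∈ Set.Icc (0:ℝ) T, |φ η| ≤ M := fun η hη => le_csSup hbdd ⟨η, hη, rfl⟩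
  have hM0 : 0 ≤ M := le_trans (abs_nonneg (φ 0)) (hMle 0 ⟨le_refl 0, h0T⟩)
  -- replace ρ by ψ
  have hcongr : ∫ η in (0:ℝ)..T, φ η * ρ η = ∫ η in (0:ℝ)..T, φ η * ψ η := by
    apply intervalIntegral.integral_congr_ae
    filter_upwards [haes, haet] with η h1 h2 hη
    rw [uIoc_of_le h0T] at hη
    rw [hρ η hη.1.le h1 h2]
  -- integrability of |φψ|
  have hMInt : IntervalIntegrable (fun η => M * |ψ η|) volume 0 T :=
    (hInt 0 T).abs.const_mul M
  have hφψ : IntervalIntegrable (fun η => |φ η * ψ η|) volume 0 T := by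
    refine IntervalIntegrable.mono_fun' hMInt
      ((hφm.mul hψm).abs).aestronglyMeasurable.restrict ?_
    rw [uIoc_of_le h0T]
    refine (ae_restrict_iff' measurableSet_Ioc).mpr (Filter.Eventually.of_forall fun η hη => ?_)
    simp only [Real.norm_eq_abs, abs_abs, abs_mul]
    exact mul_le_mul_of_nonneg_right (hMle η ⟨hη.1.le, hη.2⟩) (abs_nonneg _)
  -- final chain
  calc |∫ η in (0:ℝ)..T, φ η * ρ η|
      = |∫ η in (0:ℝ)..T, φ η * ψ η| := by rw [hcongr]
    _ ≤ ∫ η in (0:ℝ)..T, |φ η * ψ η| := abs_integral_le_integral_abs h0T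
    _ ≤ ∫ η in (0:ℝ)..T, M * |ψ η| := by
        refine integral_mono_on h0T hφψ hMInt fun η hη => ?_
        rw [abs_mul]
        exact mul_le_mul_of_nonneg_right (hMle η hη) (abs_nonneg _)
    _ = M * ∫ η in (0:ℝ)..T, |ψ η| := intervalIntegral.integral_const_mul M _
    _ ≤ M * (2 * (t - s) ^ (2*H)) := mul_le_mul_of_nonneg_left htot hM0
    _ = 2 * (t - s) ^ (2 * H) * M := by ring
end

section
/- Let H ∈ (1/4, 1/2], T > 0, let φ : [0,T]² → ℝ be bounded and measurable, and let 0 ≤ s < t ≤ T. For integers n ≥ 0 and 0 ≤ i ≤ 2ⁿ, set u_{i,n} := s + 2^{−n}(t − s) i. Then for every integer ℓ ≥ 1, |∑_{n=1}^{ℓ} ∑_{i=0}^{2^{n−1}−1} ∫_0^T ∫_0^T φ(η,ζ) ρ_{u_{2i,n}, u_{2i+1,n}}(η) ρ_{u_{2i+1,n}, u_{2i+2,n}}(ζ) dη dζ| ≤ (4 / (2^{4H} − 2)) · (t − s)^{4H} · sup_{(η,ζ) ∈ [0,T]²} |φ(η,ζ)|. -/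
open MeasureTheory intervalIntegral Set

set_option maxHeartbeats 1000000 in
lemma abs_rpow_intervalIntegrable {r : ℝ} (hr : -1 < r) (a b : ℝ) :
    IntervalIntegrable (fun x : ℝ => |x| ^ r) MeasureTheory.volume a b := by
  have key : ∀ c : ℝ, IntervalIntegrable (fun x : ℝ => |x| ^ r) MeasureTheory.volume 0 c := by
    intro c
    rcases le_or_gt 0 c with hc | hc
    · rw [intervalIntegrable_iff]
      refine (intervalIntegrable_rpow' (a := 0) (b := c) hr).def'.congr_fun ?_ measurableSet_uIoc
      intro x hx
      rw [Set.uIoc_of_le hc] at hx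
      show x ^ r = |x| ^ r
      rw [abs_of_pos hx.1]
    · have h1 : IntervalIntegrable (fun x : ℝ => (-x) ^ r) MeasureTheory.volume (-0) (-(-c)) :=
        (IntervalIntegrable.iff_comp_neg (f := fun x : ℝ => x ^ r) enorm_ne_top).mp (intervalIntegrable_rpow' (a := 0) (b := -c) hr)
      rw [neg_zero, neg_neg] at h1
      rw [intervalIntegrable_iff] at h1 ⊢
      refine h1.congr_fun ?_ measurableSet_uIoc
      intro x hx
      rw [Set.uIoc_of_ge hc.le] at hx
      show (-x) ^ r = |x| ^ r
      rw [abs_of_nonpos hx.2]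
  exact ((key a).symm.trans (key b))

lemma int_abs_rpow_left {r : ℝ} (hr : -1 < r) {c d e : ℝ} (hde : d ≤ e) (hec : e ≤ c)
    :
    ∫ η in d..e, |c - η| ^ r = ((c - d) ^ (r + 1) - (c - e) ^ (r + 1)) / (r + 1) := by
  have h1 : (∫ η in d..e, |c - η| ^ r) = ∫ x in c - e..c - d, |x| ^ r :=
    intervalIntegral.integral_comp_sub_left (fun x => |x| ^ r) c
  rw [h1]
  have h2 : (∫ x in c - e..c - d, |x| ^ r) = ∫ x in c - e..c - d, x ^ r := by
    refine intervalIntegral.integral_congr fun x hx => ?_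
    rw [Set.uIcc_of_le (by linarith)] at hx
    show |x| ^ r = x ^ r
    rw [abs_of_nonneg (by linarith [hx.1])]
  rw [h2, integral_rpow (Or.inl hr)]

lemma int_abs_rpow_right {r : ℝ} (hr : -1 < r) {c d e : ℝ} (hde : d ≤ e) (hcd : c ≤ d) :
    ∫ η in d..e, |c - η| ^ r = ((e - c) ^ (r + 1) - (d - c) ^ (r + 1)) / (r + 1) := by
  have h0 : (∫ η in d..e, |c - η| ^ r) = ∫ η in d..e, |η - c| ^ r := by
    refine intervalIntegral.integral_congr fun x hx => ?_
    show |c - x| ^ r = |x - c| ^ r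
    rw [abs_sub_comm]
  have h1 : (∫ η in d..e, |η - c| ^ r) = ∫ x in d - c..e - c, |x| ^ r :=
    intervalIntegral.integral_comp_sub_right (fun x => |x| ^ r) c
  rw [h0, h1]
  have h2 : (∫ x in d - c..e - c, |x| ^ r) = ∫ x in d - c..e - c, x ^ r := by
    refine intervalIntegral.integral_congr fun x hx => ?_
    rw [Set.uIcc_of_le (by linarith)] at hx
    show |x| ^ r = x ^ r
    rw [abs_of_nonneg (by linarith [hx.1])]
  rw [h2, integral_rpow (Or.inl hr)]

lemma abs_real_sign_le_one (x : ℝ) : |Real.sign x| ≤ 1 := by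
  rcases Real.sign_apply_eq x with h | h | h <;> rw [h] <;> norm_num

lemma ae_ne_real (a : ℝ) : ∀ᵐ η : ℝ ∂MeasureTheory.volume, η ≠ a := by
  refine MeasureTheory.ae_iff.2 ?_
  have h : {η : ℝ | ¬ η ≠ a} = {a} := by ext x; simp
  rw [h, Real.volume_singleton]

lemma rho_core (H : ℝ) (hH0 : 1/4 < H) (hH1 : H ≤ 1/2) {T a b : ℝ}
    (ha : 0 ≤ a) (hab : a < b) (hbT : b ≤ T) :
    IntervalIntegrable (fun η => H * (Real.sign (b - η) * |b - η| ^ (2*H-1)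
        - Real.sign (a - η) * |a - η| ^ (2*H-1))) MeasureTheory.volume 0 T ∧
    (∫ η in (0:ℝ)..T, |H * (Real.sign (b - η) * |b - η| ^ (2*H-1)
        - Real.sign (a - η) * |a - η| ^ (2*H-1))|) ≤ 2 * (b - a) ^ (2*H) := by
  have hH : (0:ℝ) < H := by linarith
  set r : ℝ := 2*H - 1 with hrdef
  have hr : -1 < r := by rw [hrdef]; linarith
  have hrle : r ≤ 0 := by rw [hrdef]; linarith
  have hr1 : r + 1 = 2*H := by rw [hrdef]; ring
  have h2H : (0:ℝ) < 2*H := by linarith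
  have h2Hne : (2*H : ℝ) ≠ 0 := ne_of_gt h2H
  set f : ℝ → ℝ := fun η => H * (Real.sign (b - η) * |b - η| ^ r
      - Real.sign (a - η) * |a - η| ^ r) with hfdef
  -- basic integrability
  have hpint : ∀ c d e : ℝ, IntervalIntegrable (fun η => |c - η| ^ r)
      MeasureTheory.volume d e := by
    intro c d e
    have h := (abs_rpow_intervalIntegrable hr (c - d) (c - e)).comp_sub_left c
    simpa using h
  have hgint : ∀ c d e : ℝ, IntervalIntegrable (fun η => Real.sign (c - η) * |c - η| ^ r)
      MeasureTheory.volume d e := by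
    intro c d e
    refine (hpint c d e).mono_fun ?_ ?_
    · exact ((measurable_realSign.comp (measurable_const.sub measurable_id)).mul
        ((measurable_abs_rpow r).comp (measurable_const.sub measurable_id))).aestronglyMeasurable
    · refine Filter.Eventually.of_forall fun x => ?_
      show ‖_‖ ≤ ‖_‖
      rw [Real.norm_eq_abs, Real.norm_eq_abs, abs_mul]
      calc |Real.sign (c - x)| * |(|c - x| ^ r)| ≤ 1 * |(|c - x| ^ r)| :=
            mul_le_mul_of_nonneg_right (abs_real_sign_le_one _) (abs_nonneg _)
        _ = |(|c - x| ^ r)| := one_mul _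
  have hfint : ∀ d e : ℝ, IntervalIntegrable f MeasureTheory.volume d e := fun d e =>
    (((hgint b d e).sub (hgint a d e)).const_mul H)
  have hfabs : ∀ d e : ℝ, IntervalIntegrable (fun η => |f η|) MeasureTheory.volume d e :=
    fun d e => (hfint d e).abs
  refine ⟨hfint 0 T, ?_⟩
  -- split the integral
  have hsplit : (∫ η in (0:ℝ)..T, |f η|)
      = (∫ η in (0:ℝ)..a, |f η|) + (∫ η in a..b, |f η|) + (∫ η in b..T, |f η|) := by
    rw [integral_add_adjacent_intervals (hfabs 0 a) (hfabs a b),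
      integral_add_adjacent_intervals (hfabs 0 b) (hfabs b T)]
  -- ae lemmas
  have haeab : ∀ᵐ η : ℝ ∂MeasureTheory.volume, η ≠ a ∧ η ≠ b :=
    (ae_ne_real a).and (ae_ne_real b)
  -- pointwise rpow monotonicity facts
  -- piece A
  have hA : (∫ η in (0:ℝ)..a, |f η|)
      ≤ (a ^ (2*H) - b ^ (2*H) + (b - a) ^ (2*H)) / 2 := by
    have hmono : (∫ η in (0:ℝ)..a, |f η|)
        ≤ ∫ η in (0:ℝ)..a, H * (|a - η| ^ r - |b - η| ^ r) := by
      refine integral_mono_ae_restrict ha (hfabs 0 a)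
        (((hpint a 0 a).sub (hpint b 0 a)).const_mul H) ?_
      filter_upwards [MeasureTheory.ae_restrict_of_ae haeab,
        MeasureTheory.ae_restrict_mem measurableSet_Icc] with η hne hη
      have hηa : η < a := lt_of_le_of_ne hη.2 hne.1
      have h1 : (0:ℝ) < a - η := by linarith
      have h2 : (0:ℝ) < b - η := by linarith
      have hfη : f η = H * (|b - η| ^ r - |a - η| ^ r) := by
        rw [hfdef]
        simp only [Real.sign_of_pos h1, Real.sign_of_pos h2, one_mul]
      have hle : |b - η| ^ r ≤ |a - η| ^ r := by
        rw [abs_of_pos h1, abs_of_pos h2]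
        exact Real.rpow_le_rpow_of_nonpos h1 (by linarith) hrle
      rw [hfη, abs_mul, abs_of_nonneg hH.le, abs_of_nonpos (by linarith), neg_sub]
    have hcomp : (∫ η in (0:ℝ)..a, H * (|a - η| ^ r - |b - η| ^ r))
        = (a ^ (2*H) - b ^ (2*H) + (b - a) ^ (2*H)) / 2 := by
      rw [intervalIntegral.integral_const_mul,
        intervalIntegral.integral_sub (hpint a 0 a) (hpint b 0 a),
        int_abs_rpow_left hr ha le_rfl, int_abs_rpow_left hr ha hab.le, hr1]
      rw [sub_self, sub_zero, Real.zero_rpow h2Hne]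
      field_simp
      ring
    linarith
  -- piece B
  have hB : (∫ η in a..b, |f η|) ≤ (b - a) ^ (2*H) := by
    have hmono : (∫ η in a..b, |f η|)
        ≤ ∫ η in a..b, H * (|b - η| ^ r + |a - η| ^ r) := by
      refine integral_mono_ae_restrict hab.le (hfabs a b)
        (((hpint b a b).add (hpint a a b)).const_mul H) ?_
      filter_upwards [MeasureTheory.ae_restrict_of_ae haeab,
        MeasureTheory.ae_restrict_mem measurableSet_Icc] with η hne hη
      have hηa : a < η := lt_of_le_of_ne hη.1 (Ne.symm hne.1)
      have hηb : η < b := lt_of_le_of_ne hη.2 hne.2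
      have h1 : a - η < 0 := by linarith
      have h2 : (0:ℝ) < b - η := by linarith
      have hfη : f η = H * (|b - η| ^ r + |a - η| ^ r) := by
        rw [hfdef]
        simp only [Real.sign_of_pos h2, Real.sign_of_neg h1, one_mul, neg_one_mul,
          sub_neg_eq_add]
      rw [hfη, abs_mul, abs_of_nonneg hH.le, abs_of_nonneg (by positivity)]
    have hcomp : (∫ η in a..b, H * (|b - η| ^ r + |a - η| ^ r)) = (b - a) ^ (2*H) := by
      rw [intervalIntegral.integral_const_mul,
        intervalIntegral.integral_add (hpint b a b) (hpint a a b),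
        int_abs_rpow_left hr hab.le le_rfl, int_abs_rpow_right hr hab.le le_rfl, hr1]
      rw [sub_self, sub_self, Real.zero_rpow h2Hne]
      field_simp
      ring
    linarith
  -- piece C
  have hC : (∫ η in b..T, |f η|)
      ≤ ((T - b) ^ (2*H) - (T - a) ^ (2*H) + (b - a) ^ (2*H)) / 2 := by
    have hmono : (∫ η in b..T, |f η|)
        ≤ ∫ η in b..T, H * (|b - η| ^ r - |a - η| ^ r) := by
      refine integral_mono_ae_restrict hbT (hfabs b T)
        (((hpint b b T).sub (hpint a b T)).const_mul H) ?_
      filter_upwards [MeasureTheory.ae_restrict_of_ae haeab,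
        MeasureTheory.ae_restrict_mem measurableSet_Icc] with η hne hη
      have hηb : b < η := lt_of_le_of_ne hη.1 (Ne.symm hne.2)
      have h1 : a - η < 0 := by linarith
      have h2 : b - η < 0 := by linarith
      have hfη : f η = H * (|a - η| ^ r - |b - η| ^ r) := by
        rw [hfdef]
        simp only [Real.sign_of_neg h1, Real.sign_of_neg h2, neg_one_mul]
        ring
      have hle : |a - η| ^ r ≤ |b - η| ^ r := by
        rw [abs_of_neg h1, abs_of_neg h2]
        exact Real.rpow_le_rpow_of_nonpos (by linarith) (by linarith) hrle
      rw [hfη, abs_mul, abs_of_nonneg hH.le, abs_of_nonpos (by linarith), neg_sub]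
    have hcomp : (∫ η in b..T, H * (|b - η| ^ r - |a - η| ^ r))
        = ((T - b) ^ (2*H) - (T - a) ^ (2*H) + (b - a) ^ (2*H)) / 2 := by
      rw [intervalIntegral.integral_const_mul,
        intervalIntegral.integral_sub (hpint b b T) (hpint a b T),
        int_abs_rpow_right hr hbT le_rfl, int_abs_rpow_right hr hbT hab.le, hr1]
      rw [sub_self, Real.zero_rpow h2Hne]
      field_simp
      ring
    linarith
  -- combine
  have hab2H : a ^ (2*H) ≤ b ^ (2*H) := Real.rpow_le_rpow ha hab.le h2H.le
  have hT2H : (T - b) ^ (2*H) ≤ (T - a) ^ (2*H) :=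
    Real.rpow_le_rpow (by linarith) (by linarith) h2H.le
  rw [hsplit]
  linarith

lemma double_bound {T : ℝ} (hT : 0 ≤ T) {M I1 I2 : ℝ} (hM : 0 ≤ M) (hI1 : 0 ≤ I1)
    (φ : ℝ → ℝ → ℝ) (hφm : Measurable fun q : ℝ × ℝ => φ q.1 q.2)
    (hφb : ∀ η ∈ Set.Icc (0:ℝ) T, ∀ ζ ∈ Set.Icc (0:ℝ) T, |φ η ζ| ≤ M)
    (f1 f2 : ℝ → ℝ) (hf1m : Measurable f1) (hf2m : Measurable f2)
    (hf1i : IntervalIntegrable f1 MeasureTheory.volume 0 T)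
    (hf2i : IntervalIntegrable f2 MeasureTheory.volume 0 T)
    (hI1b : (∫ η in (0:ℝ)..T, |f1 η|) ≤ I1) (hI2b : (∫ ζ in (0:ℝ)..T, |f2 ζ|) ≤ I2) :
    |∫ ζ in (0:ℝ)..T, (∫ η in (0:ℝ)..T, φ η ζ * f1 η) * f2 ζ| ≤ M * I1 * I2 := by
  set G : ℝ → ℝ := fun ζ => ∫ η in (0:ℝ)..T, φ η ζ * f1 η with hGdef
  -- pointwise bound on G
  have hGb : ∀ ζ ∈ Set.Icc (0:ℝ) T, |G ζ| ≤ M * I1 := by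
    intro ζ hζ
    have h1 : |G ζ| ≤ ∫ η in (0:ℝ)..T, |φ η ζ * f1 η| :=
      intervalIntegral.abs_integral_le_integral_abs hT
    have habs_int : IntervalIntegrable (fun η => |φ η ζ * f1 η|)
        MeasureTheory.volume 0 T := by
      refine (hf1i.abs.const_mul M).mono_fun ?_ ?_
      · refine (Measurable.aestronglyMeasurable ?_)
        exact ((hφm.comp (measurable_id.prodMk measurable_const)).mul hf1m).abs
      · filter_upwards [MeasureTheory.ae_restrict_mem measurableSet_uIoc] with η hη
        rw [Set.uIoc_of_le hT] at hη
        have hηI : η ∈ Set.Icc (0:ℝ) T := ⟨hη.1.le, hη.2⟩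
        show ‖_‖ ≤ ‖_‖
        rw [Real.norm_eq_abs, Real.norm_eq_abs, abs_abs, abs_mul, abs_mul, abs_abs,
          abs_of_nonneg hM]
        exact mul_le_mul_of_nonneg_right (hφb η hηI ζ hζ) (abs_nonneg _)
    have h2 : (∫ η in (0:ℝ)..T, |φ η ζ * f1 η|) ≤ ∫ η in (0:ℝ)..T, M * |f1 η| := by
      refine integral_mono_ae_restrict hT habs_int (hf1i.abs.const_mul M) ?_
      filter_upwards [MeasureTheory.ae_restrict_mem measurableSet_Icc] with η hη
      rw [abs_mul]
      exact mul_le_mul_of_nonneg_right (hφb η hη ζ hζ) (abs_nonneg _)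
    have h3 : (∫ η in (0:ℝ)..T, M * |f1 η|) = M * ∫ η in (0:ℝ)..T, |f1 η| :=
      intervalIntegral.integral_const_mul _ _
    calc |G ζ| ≤ ∫ η in (0:ℝ)..T, |φ η ζ * f1 η| := h1
      _ ≤ ∫ η in (0:ℝ)..T, M * |f1 η| := h2
      _ = M * ∫ η in (0:ℝ)..T, |f1 η| := h3
      _ ≤ M * I1 := mul_le_mul_of_nonneg_left hI1b hM
  -- measurability of G
  have hGm : Measurable G := by
    have hK : Measurable fun q : ℝ × ℝ => φ q.2 q.1 * f1 q.2 :=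
      (hφm.comp measurable_swap).mul (hf1m.comp measurable_snd)
    have h := (hK.stronglyMeasurable.integral_prod_right'
      (ν := MeasureTheory.volume.restrict (Set.Ioc (0:ℝ) T))).measurable
    have : G = fun ζ => ∫ η in Set.Ioc (0:ℝ) T, φ η ζ * f1 η := by
      funext ζ
      rw [hGdef]
      exact intervalIntegral.integral_of_le hT
    rw [this]
    exact h
  -- outer estimate
  have houter_abs_int : IntervalIntegrable (fun ζ => |G ζ * f2 ζ|)
      MeasureTheory.volume 0 T := by
    refine (hf2i.abs.const_mul (M * I1)).mono_fun ?_ ?_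
    · exact ((hGm.mul hf2m).abs).aestronglyMeasurable
    · filter_upwards [MeasureTheory.ae_restrict_mem measurableSet_uIoc] with ζ hζ
      rw [Set.uIoc_of_le hT] at hζ
      have hζI : ζ ∈ Set.Icc (0:ℝ) T := ⟨hζ.1.le, hζ.2⟩
      show ‖_‖ ≤ ‖_‖
      rw [Real.norm_eq_abs, Real.norm_eq_abs, abs_abs, abs_mul, abs_mul,
        abs_of_nonneg (mul_nonneg hM hI1), abs_abs]
      exact mul_le_mul_of_nonneg_right (hGb ζ hζI) (abs_nonneg _)
  have h1 : |∫ ζ in (0:ℝ)..T, G ζ * f2 ζ| ≤ ∫ ζ in (0:ℝ)..T, |G ζ * f2 ζ| :=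
    intervalIntegral.abs_integral_le_integral_abs hT
  have h2 : (∫ ζ in (0:ℝ)..T, |G ζ * f2 ζ|) ≤ ∫ ζ in (0:ℝ)..T, (M * I1) * |f2 ζ| := by
    refine integral_mono_ae_restrict hT houter_abs_int (hf2i.abs.const_mul (M * I1)) ?_
    filter_upwards [MeasureTheory.ae_restrict_mem measurableSet_Icc] with ζ hζ
    rw [abs_mul]
    exact mul_le_mul_of_nonneg_right (hGb ζ hζ) (abs_nonneg _)
  have h3 : (∫ ζ in (0:ℝ)..T, (M * I1) * |f2 ζ|) = (M * I1) * ∫ ζ in (0:ℝ)..T, |f2 ζ| :=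
    intervalIntegral.integral_const_mul _ _
  calc |∫ ζ in (0:ℝ)..T, G ζ * f2 ζ| ≤ ∫ ζ in (0:ℝ)..T, |G ζ * f2 ζ| := h1
    _ ≤ ∫ ζ in (0:ℝ)..T, (M * I1) * |f2 ζ| := h2
    _ = (M * I1) * ∫ ζ in (0:ℝ)..T, |f2 ζ| := h3
    _ ≤ M * I1 * I2 := mul_le_mul_of_nonneg_left hI2b (mul_nonneg hM hI1)

lemma density_measurable (H : ℝ) (a b : ℝ) :
    Measurable (fun η : ℝ => H * (Real.sign (b - η) * |b - η| ^ (2*H-1)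
      - Real.sign (a - η) * |a - η| ^ (2*H-1))) := by
  have h1 : ∀ c : ℝ, Measurable (fun η : ℝ => Real.sign (c - η) * |c - η| ^ (2*H-1)) :=
    fun c => (measurable_realSign.comp (measurable_const.sub measurable_id)).mul
      ((measurable_abs_rpow (2*H-1)).comp (measurable_const.sub measurable_id))
  exact ((h1 b).sub (h1 a)).const_mul H

lemma term_bound (H : ℝ) (hH0 : 1/4 < H) (hH1 : H ≤ 1/2) {T : ℝ} (hT0 : 0 ≤ T)
    {M : ℝ} (hM0 : 0 ≤ M)
    (φ : ℝ → ℝ → ℝ) (hφm : Measurable fun q : ℝ × ℝ => φ q.1 q.2)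
    (hMb : ∀ η ∈ Set.Icc (0:ℝ) T, ∀ ζ ∈ Set.Icc (0:ℝ) T, |φ η ζ| ≤ M)
    (ρ : ℝ → ℝ → ℝ → ℝ)
    (hρ : ∀ a b : ℝ, a < b → ∀ η : ℝ, 0 ≤ η → η ≠ a → η ≠ b →
      ρ a b η = H * (Real.sign (b - η) * |b - η| ^ (2 * H - 1)
        - Real.sign (a - η) * |a - η| ^ (2 * H - 1)))
    {a b c δ : ℝ} (h0a : 0 ≤ a) (hab : a < b) (hbc : b < c) (hcT : c ≤ T)
    (hba : b - a = δ) (hcb : c - b = δ) :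
    |∫ ζ in (0:ℝ)..T, ∫ η in (0:ℝ)..T, φ η ζ * ρ a b η * ρ b c ζ|
      ≤ M * (2 * δ ^ (2*H)) * (2 * δ ^ (2*H)) := by
  obtain ⟨hf1i, hf1b⟩ := rho_core H hH0 hH1 h0a hab (le_trans hbc.le hcT)
  obtain ⟨hf2i, hf2b⟩ := rho_core H hH0 hH1 (le_trans h0a hab.le) hbc hcT
  rw [hba] at hf1b
  rw [hcb] at hf2b
  have inner_eq : ∀ ζ : ℝ, (∫ η in (0:ℝ)..T, φ η ζ * ρ a b η * ρ b c ζ)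
      = (∫ η in (0:ℝ)..T, φ η ζ * (H * (Real.sign (b - η) * |b - η| ^ (2*H-1)
          - Real.sign (a - η) * |a - η| ^ (2*H-1)))) * ρ b c ζ := by
    intro ζ
    rw [← intervalIntegral.integral_mul_const]
    refine intervalIntegral.integral_congr_ae ?_
    filter_upwards [(ae_ne_real a).and (ae_ne_real b)] with η hne hη
    rw [Set.uIoc_of_le hT0] at hη
    rw [hρ a b hab η hη.1.le hne.1 hne.2]
  have outer_eq : (∫ ζ in (0:ℝ)..T, ∫ η in (0:ℝ)..T, φ η ζ * ρ a b η * ρ b c ζ)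
      = ∫ ζ in (0:ℝ)..T, (∫ η in (0:ℝ)..T, φ η ζ * (H * (Real.sign (b - η) * |b - η| ^ (2*H-1)
          - Real.sign (a - η) * |a - η| ^ (2*H-1))))
          * (H * (Real.sign (c - ζ) * |c - ζ| ^ (2*H-1)
          - Real.sign (b - ζ) * |b - ζ| ^ (2*H-1))) := by
    rw [intervalIntegral.integral_congr (g := fun ζ =>
      (∫ η in (0:ℝ)..T, φ η ζ * (H * (Real.sign (b - η) * |b - η| ^ (2*H-1)
          - Real.sign (a - η) * |a - η| ^ (2*H-1)))) * ρ b c ζ) (fun ζ _ => inner_eq ζ)]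
    refine intervalIntegral.integral_congr_ae ?_
    filter_upwards [(ae_ne_real b).and (ae_ne_real c)] with ζ hne hζ
    rw [Set.uIoc_of_le hT0] at hζ
    rw [hρ b c hbc ζ hζ.1.le hne.1 hne.2]
  rw [outer_eq]
  have hδ0 : (0:ℝ) < δ := by rw [← hba]; linarith
  exact double_bound hT0 hM0 (by nlinarith [Real.rpow_nonneg hδ0.le (2*H)]) φ hφm hMb _ _
    (density_measurable H a b) (density_measurable H b c) hf1i hf2i hf1b hf2b

/-- For `H ∈ (1/4,1/2]`, a bounded measurable `φ : [0,T]² → ℝ`, `0 ≤ s < t ≤ T`, and the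
dyadic points `u_{i,n} = s + 2^{−n}(t − s) i`, for every `ℓ ≥ 1`,
`|∑_{n=1}^{ℓ} ∑_{i=0}^{2^{n−1}−1} ∫_0^T ∫_0^T φ(η,ζ) ρ_{u_{2i,n},u_{2i+1,n}}(η)
    ρ_{u_{2i+1,n},u_{2i+2,n}}(ζ) dη dζ|
  ≤ (4 / (2^{4H} − 2)) (t − s)^{4H} sup_{(η,ζ) ∈ [0,T]²} |φ(η,ζ)|`,
where `ρ_{ab}(η) = H (sgn(b − η)|b − η|^{2H−1} − sgn(a − η)|a − η|^{2H−1})` (set to `0` at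
`η ∈ {a, b}`). -/
theorem fbm_density_dyadic_sum_bound
    (H : ℝ) (hH0 : 1 / 4 < H) (hH1 : H ≤ 1 / 2)
    (T : ℝ) (hT : 0 < T)
    (φ : ℝ → ℝ → ℝ) (hφm : Measurable fun q : ℝ × ℝ => φ q.1 q.2)
    (hφb : ∃ M : ℝ, ∀ η ∈ Set.Icc (0 : ℝ) T, ∀ ζ ∈ Set.Icc (0 : ℝ) T, |φ η ζ| ≤ M)
    (s t : ℝ) (hs : 0 ≤ s) (hst : s < t) (ht : t ≤ T)
    (ρ : ℝ → ℝ → ℝ → ℝ)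
    (hρ : ∀ a b : ℝ, a < b → ∀ η : ℝ, 0 ≤ η → η ≠ a → η ≠ b →
      ρ a b η = H * (Real.sign (b - η) * |b - η| ^ (2 * H - 1)
        - Real.sign (a - η) * |a - η| ^ (2 * H - 1)))
    (hρa : ∀ a b : ℝ, ρ a b a = 0) (hρb : ∀ a b : ℝ, ρ a b b = 0)
    (u : ℕ → ℕ → ℝ)
    (hu : ∀ i n : ℕ, u i n = s + 2 ^ (-(n : ℝ)) * (t - s) * i) :
    ∀ ℓ : ℕ, 1 ≤ ℓ →
      |∑ n ∈ Finset.Icc 1 ℓ, ∑ i ∈ Finset.range (2 ^ (n - 1)),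
          ∫ ζ in (0 : ℝ)..T, ∫ η in (0 : ℝ)..T,
            φ η ζ * ρ (u (2 * i) n) (u (2 * i + 1) n) η *
              ρ (u (2 * i + 1) n) (u (2 * i + 2) n) ζ|
        ≤ (4 / (2 ^ (4 * H) - 2)) * (t - s) ^ (4 * H) *
            sSup ((fun q : ℝ × ℝ => |φ q.1 q.2|) ''
              (Set.Icc (0 : ℝ) T ×ˢ Set.Icc (0 : ℝ) T)) := by
  intro ℓ hℓ
  have hT0 : (0:ℝ) ≤ T := hT.le
  have hts : (0:ℝ) < t - s := by linarith
  -- the sup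
  obtain ⟨M₀, hM₀⟩ := hφb
  set M : ℝ := sSup ((fun q : ℝ × ℝ => |φ q.1 q.2|) ''
      (Set.Icc (0 : ℝ) T ×ˢ Set.Icc (0 : ℝ) T)) with hMdef
  have hbdd : BddAbove ((fun q : ℝ × ℝ => |φ q.1 q.2|) ''
      (Set.Icc (0 : ℝ) T ×ˢ Set.Icc (0 : ℝ) T)) := by
    refine ⟨M₀, ?_⟩
    rintro x ⟨⟨η, ζ⟩, hq, rfl⟩
    exact hM₀ η hq.1 ζ hq.2
  have hMb : ∀ η ∈ Set.Icc (0:ℝ) T, ∀ ζ ∈ Set.Icc (0:ℝ) T, |φ η ζ| ≤ M :=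
    fun η hη ζ hζ => le_csSup hbdd ⟨(η, ζ), ⟨hη, hζ⟩, rfl⟩
  have hM0 : 0 ≤ M :=
    le_trans (abs_nonneg _) (hMb 0 ⟨le_rfl, hT0⟩ 0 ⟨le_rfl, hT0⟩)
  set D : ℝ := (t - s) ^ (4*H) with hDdef
  have hD0 : 0 ≤ D := Real.rpow_nonneg hts.le _
  set q : ℝ := 2 ^ (1 - 4*H) with hqdef
  have hq0 : 0 < q := Real.rpow_pos_of_pos two_pos _
  have hq1 : q < 1 := Real.rpow_lt_one_of_one_lt_of_neg one_lt_two (by linarith)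
  -- per (n, i) bound
  have hterm : ∀ n ∈ Finset.Icc 1 ℓ, ∀ i ∈ Finset.range (2^(n-1)),
      |∫ ζ in (0:ℝ)..T, ∫ η in (0:ℝ)..T, φ η ζ * ρ (u (2*i) n) (u (2*i+1) n) η *
        ρ (u (2*i+1) n) (u (2*i+2) n) ζ|
      ≤ M * (2 * ((2:ℝ)^(-(n:ℝ)) * (t-s)) ^ (2*H)) * (2 * ((2:ℝ)^(-(n:ℝ)) * (t-s)) ^ (2*H)) := by
    intro n hn i hi
    have hn1 : 1 ≤ n := (Finset.mem_Icc.mp hn).1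
    have hi' : i < 2^(n-1) := Finset.mem_range.mp hi
    have hδ0 : (0:ℝ) < (2:ℝ)^(-(n:ℝ)) * (t-s) :=
      mul_pos (Real.rpow_pos_of_pos two_pos _) hts
    have hba : u (2*i+1) n - u (2*i) n = (2:ℝ)^(-(n:ℝ)) * (t-s) := by
      rw [hu, hu]; push_cast; ring
    have hcb : u (2*i+2) n - u (2*i+1) n = (2:ℝ)^(-(n:ℝ)) * (t-s) := by
      rw [hu, hu]; push_cast; ring
    have hab : u (2*i) n < u (2*i+1) n := by linarith
    have hbc : u (2*i+1) n < u (2*i+2) n := by linarith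
    have h0a : 0 ≤ u (2*i) n := by
      rw [hu]
      have : (0:ℝ) ≤ 2^(-(n:ℝ)) * (t-s) * ((2*i : ℕ) : ℝ) :=
        mul_nonneg hδ0.le (Nat.cast_nonneg _)
      linarith
    have hcT : u (2*i+2) n ≤ T := by
      have h2i : ((2*i+2 : ℕ) : ℝ) ≤ ((2^n : ℕ) : ℝ) := by
        have hnat : 2*i+2 ≤ 2^n := by
          have h1 : i + 1 ≤ 2^(n-1) := hi'
          have h2 : 2^(n-1+1) = 2^n := by congr 1; omega
          calc 2*i+2 = 2*(i+1) := by ring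
            _ ≤ 2*2^(n-1) := by omega
            _ = 2^(n-1+1) := (pow_succ' 2 (n-1)).symm
            _ = 2^n := h2
        exact_mod_cast hnat
      have hpow : (2:ℝ)^(-(n:ℝ)) * ((2^n : ℕ) : ℝ) = 1 := by
        push_cast
        rw [← Real.rpow_natCast 2 n, ← Real.rpow_add two_pos]
        norm_num
      have hc_eq : u (2*i+2) n = s + 2^(-(n:ℝ)) * (t-s) * ((2*i+2 : ℕ) : ℝ) := by
        rw [hu]
      calc u (2*i+2) n = s + 2^(-(n:ℝ)) * (t-s) * ((2*i+2 : ℕ) : ℝ) := hc_eq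
        _ ≤ s + 2^(-(n:ℝ)) * (t-s) * ((2^n : ℕ) : ℝ) := by
            have := mul_le_mul_of_nonneg_left h2i hδ0.le
            linarith
        _ = s + (t - s) := by
            rw [show (2:ℝ)^(-(n:ℝ)) * (t-s) * ((2^n : ℕ) : ℝ)
              = (2^(-(n:ℝ)) * ((2^n : ℕ) : ℝ)) * (t-s) by ring, hpow, one_mul]
        _ = t := by ring
        _ ≤ T := ht
    exact term_bound H hH0 hH1 hT0 hM0 φ hφm hMb ρ hρ h0a hab hbc hcT hba hcb
  -- summation
  have key : ∀ n : ℕ, 1 ≤ n →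
      ((2^(n-1) : ℕ) : ℝ) * (M * (2 * ((2:ℝ)^(-(n:ℝ)) * (t-s)) ^ (2*H))
        * (2 * ((2:ℝ)^(-(n:ℝ)) * (t-s)) ^ (2*H))) = 2*M*D*q^n := by
    intro n hn1
    have hp : (0:ℝ) < (2:ℝ)^(-(n:ℝ)) := Real.rpow_pos_of_pos two_pos _
    have hδ0 : (0:ℝ) < (2:ℝ)^(-(n:ℝ)) * (t-s) := mul_pos hp hts
    have e1 : ((2:ℝ)^(-(n:ℝ)) * (t-s)) ^ (2*H) * ((2:ℝ)^(-(n:ℝ)) * (t-s)) ^ (2*H)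
        = ((2:ℝ)^(-(n:ℝ)) * (t-s)) ^ (4*H) := by
      rw [← Real.rpow_add hδ0]; ring_nf
    have e2 : ((2:ℝ)^(-(n:ℝ)) * (t-s)) ^ (4*H) = (2:ℝ)^((-(n:ℝ))*(4*H)) * D := by
      rw [Real.mul_rpow hp.le hts.le, Real.rpow_mul (by norm_num : (0:ℝ) ≤ 2), hDdef]
    have e3 : ((2^(n-1) : ℕ) : ℝ) = (2:ℝ)^((n:ℝ)-1) := by
      push_cast
      rw [← Real.rpow_natCast 2 (n-1)]
      congr 1
      rw [Nat.cast_sub hn1, Nat.cast_one]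
    have e4 : q^n = (2:ℝ)^((1-4*H)*(n:ℝ)) := by
      rw [hqdef, ← Real.rpow_natCast ((2:ℝ)^(1-4*H)) n,
        ← Real.rpow_mul (by norm_num : (0:ℝ) ≤ 2)]
    have h42 : (2:ℝ)^(2:ℝ) = 4 := by
      have h := Real.rpow_natCast (2:ℝ) 2
      norm_num at h
      linarith
    calc ((2^(n-1) : ℕ) : ℝ) * (M * (2 * ((2:ℝ)^(-(n:ℝ)) * (t-s)) ^ (2*H))
          * (2 * ((2:ℝ)^(-(n:ℝ)) * (t-s)) ^ (2*H)))
        = (2:ℝ)^((n:ℝ)-1) * (4 * M * (((2:ℝ)^(-(n:ℝ)) * (t-s)) ^ (2*H)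
            * ((2:ℝ)^(-(n:ℝ)) * (t-s)) ^ (2*H))) := by rw [e3]; ring
      _ = (2:ℝ)^((n:ℝ)-1) * (4 * M * ((2:ℝ)^((-(n:ℝ))*(4*H)) * D)) := by rw [e1, e2]
      _ = ((2:ℝ)^((n:ℝ)-1) * (2:ℝ)^((-(n:ℝ))*(4*H)) * (2:ℝ)^(2:ℝ)) * (M * D) := by
          rw [h42]; ring
      _ = (2:ℝ)^((n:ℝ)-1 + (-(n:ℝ))*(4*H) + 2) * (M * D) := by
          rw [← Real.rpow_add two_pos, ← Real.rpow_add two_pos]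
      _ = (2:ℝ)^(1 + (1-4*H)*(n:ℝ)) * (M * D) := by
          congr 1
          ring
      _ = ((2:ℝ)^(1:ℝ) * (2:ℝ)^((1-4*H)*(n:ℝ))) * (M * D) := by
          rw [← Real.rpow_add two_pos]
      _ = 2*M*D*q^n := by rw [Real.rpow_one, ← e4]; ring
  -- geometric sum
  have hgeom : ∑ n ∈ Finset.Icc 1 ℓ, q^n ≤ q / (1 - q) := by
    have h1q : (0:ℝ) < 1 - q := by linarith
    have hIcc : Finset.Icc 1 ℓ = Finset.Ico 1 (ℓ+1) := by
      rw [Finset.Ico_add_one_right_eq_Icc]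
    rw [hIcc, Finset.sum_Ico_eq_sum_range]
    simp only [Nat.add_sub_cancel]
    have hsum : ∑ i ∈ Finset.range ℓ, q^(1+i) = q * ∑ i ∈ Finset.range ℓ, q^i := by
      rw [Finset.mul_sum]
      refine Finset.sum_congr rfl fun i _ => ?_
      rw [add_comm, pow_add, pow_one]
      ring
    rw [hsum]
    have hgs : ∑ i ∈ Finset.range ℓ, q^i ≤ 1 / (1 - q) := by
      rw [geom_sum_eq (ne_of_lt hq1) ℓ]
      have heq : (q^ℓ - 1)/(q - 1) = (1 - q^ℓ)/(1 - q) := by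
        rw [← neg_div_neg_eq]
        ring_nf
      rw [heq]
      have hpl : (0:ℝ) ≤ q^ℓ := pow_nonneg hq0.le ℓ
      exact (div_le_div_iff_of_pos_right h1q).mpr (by linarith)
    calc q * ∑ i ∈ Finset.range ℓ, q^i ≤ q * (1/(1-q)) :=
        mul_le_mul_of_nonneg_left hgs hq0.le
      _ = q / (1 - q) := by ring
  -- final constant
  have hP : (2:ℝ) < 2^(4*H) := by
    have := Real.rpow_lt_rpow_of_exponent_lt one_lt_two (by linarith : (1:ℝ) < 4*H)
    rwa [Real.rpow_one] at this
  have hqval : q / (1 - q) = 2 / (2^(4*H) - 2) := by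
    have hq_eq : q = 2 / 2^(4*H) := by
      rw [hqdef, Real.rpow_sub two_pos, Real.rpow_one]
    have hPpos : (0:ℝ) < 2^(4*H) := by linarith
    rw [hq_eq]
    rw [div_eq_div_iff (by rw [← hq_eq]; linarith) (by linarith)]
    field_simp
  -- put it together
  calc |∑ n ∈ Finset.Icc 1 ℓ, ∑ i ∈ Finset.range (2 ^ (n - 1)),
          ∫ ζ in (0 : ℝ)..T, ∫ η in (0 : ℝ)..T,
            φ η ζ * ρ (u (2 * i) n) (u (2 * i + 1) n) η *
              ρ (u (2 * i + 1) n) (u (2 * i + 2) n) ζ|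
      ≤ ∑ n ∈ Finset.Icc 1 ℓ, ∑ i ∈ Finset.range (2 ^ (n - 1)),
          |∫ ζ in (0 : ℝ)..T, ∫ η in (0 : ℝ)..T,
            φ η ζ * ρ (u (2 * i) n) (u (2 * i + 1) n) η *
              ρ (u (2 * i + 1) n) (u (2 * i + 2) n) ζ| :=
        (Finset.abs_sum_le_sum_abs _ _).trans
          (Finset.sum_le_sum fun n _ => Finset.abs_sum_le_sum_abs _ _)
    _ ≤ ∑ n ∈ Finset.Icc 1 ℓ, 2*M*D*q^n := by
        refine Finset.sum_le_sum fun n hn => ?_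
        have hn1 : 1 ≤ n := (Finset.mem_Icc.mp hn).1
        calc ∑ i ∈ Finset.range (2 ^ (n - 1)),
            |∫ ζ in (0 : ℝ)..T, ∫ η in (0 : ℝ)..T,
              φ η ζ * ρ (u (2 * i) n) (u (2 * i + 1) n) η *
                ρ (u (2 * i + 1) n) (u (2 * i + 2) n) ζ|
            ≤ ∑ i ∈ Finset.range (2 ^ (n - 1)),
                M * (2 * ((2:ℝ)^(-(n:ℝ)) * (t-s)) ^ (2*H))
                  * (2 * ((2:ℝ)^(-(n:ℝ)) * (t-s)) ^ (2*H)) :=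
              Finset.sum_le_sum (hterm n hn)
          _ = ((2^(n-1) : ℕ) : ℝ) * (M * (2 * ((2:ℝ)^(-(n:ℝ)) * (t-s)) ^ (2*H))
                * (2 * ((2:ℝ)^(-(n:ℝ)) * (t-s)) ^ (2*H))) := by
              rw [Finset.sum_const, Finset.card_range, nsmul_eq_mul]
          _ = 2*M*D*q^n := key n hn1
    _ = 2*M*D * ∑ n ∈ Finset.Icc 1 ℓ, q^n := by rw [Finset.mul_sum]
    _ ≤ 2*M*D * (q / (1 - q)) := by
        have h2MD : (0:ℝ) ≤ 2*M*D := by positivity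
        exact mul_le_mul_of_nonneg_left hgeom h2MD
    _ = (4 / (2 ^ (4 * H) - 2)) * (t - s) ^ (4 * H) * M := by
        rw [hqval, ← hDdef]
        field_simp
        ring
end
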